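/- arXiv:1810.06708 — 3 statements merged into one kernel-verified Lean document; each statement's English description precedes it below -/
import Mathlib

section
/- T-periodic points are dense in the attractor A_T, and T : A_T → A_T has a dense orbit; in particular A_T is uncountable. -/
open scoped Classical
open MeasureTheory Filter

noncomputable section

/-- A complete, locally compact non-Archimedean field with residue field of
order `q`, absolute value normalized so that a uniformizer has norm `1/q`.
`reps` is a set of `q` coset representatives for the residue field: they cover
the ring of integers by discs of radius `1/q` and are pairwise at distance
`> 1/q`. -/
structure NAField (K : Type*) [NormedField K] where
  na : IsNonarchimedean (fun x : K => ‖x‖)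
  complete : CompleteSpace K
  locCompact : LocallyCompactSpace K
  q : ℕ
  one_lt_q : 1 < q
  valGroup : ∀ x : K, x ≠ 0 → ∃ n : ℤ, ‖x‖ = (q : ℝ) ^ n
  exists_unif : ∃ ϖ : K, ‖ϖ‖ = (q : ℝ)⁻¹
  reps : Finset K
  card_reps : reps.card = q
  norm_reps : ∀ s ∈ reps, ‖s‖ ≤ 1
  reps_cover : ∀ x : K, ‖x‖ ≤ 1 → ∃ s ∈ reps, ‖x - s‖ ≤ (q : ℝ)⁻¹
  reps_sep : ∀ s ∈ reps, ∀ t ∈ reps, s ≠ t → (q : ℝ)⁻¹ < ‖s - t‖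

variable {K : Type*} [NormedField K]

/-- `f : R → R` is `(1/q)`-Lipschitz on the ring of integers. -/
def NAField.IsLip (F : NAField K) (f : K → K) : Prop :=
  (∀ t : K, ‖t‖ ≤ 1 → ‖f t‖ ≤ 1) ∧
  ∀ t₁ t₂ : K, ‖t₁‖ ≤ 1 → ‖t₂‖ ≤ 1 → ‖f t₁ - f t₂‖ ≤ ((F.q : ℝ))⁻¹ * ‖t₁ - t₂‖

/-- The unit polydisc `R² ⊆ K²`. -/
def unitPoly (K : Type*) [NormedField K] : Set (K × K) := {p | ‖p.1‖ ≤ 1 ∧ ‖p.2‖ ≤ 1}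

/-- Horizontal `δ`-neighborhood `H_δ(f) = {(t, f t + θ) : t ∈ R, |θ| ≤ δ}`. -/
def Hnbhd (f : K → K) (δ : ℝ) : Set (K × K) :=
  {p | ∃ t θ : K, ‖t‖ ≤ 1 ∧ ‖θ‖ ≤ δ ∧ p = (t, f t + θ)}

/-- Vertical `δ`-neighborhood `V_δ(f) = {(f t + θ, t) : t ∈ R, |θ| ≤ δ}`. -/
def Vnbhd (f : K → K) (δ : ℝ) : Set (K × K) :=
  {p | ∃ t θ : K, ‖t‖ ≤ 1 ∧ ‖θ‖ ≤ δ ∧ p = (f t + θ, t)}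

/-- The automorphism `T(x,y) = (a y + b (x^q - x), x)`. -/
def NAField.Tmap (F : NAField K) (a b : K) : K × K → K × K :=
  fun p => (a * p.2 + b * (p.1 ^ F.q - p.1), p.1)

/-- The inverse automorphism `T⁻¹(x,y) = (y, a⁻¹ (x - b (y^q - y)))`. -/
def NAField.Tinv (F : NAField K) (a b : K) : K × K → K × K :=
  fun p => (p.2, a⁻¹ * (p.1 - b * (p.2 ^ F.q - p.2)))

/-- The attractor `A_T = ⋂_{n ≥ 1} Tⁿ(R²)`. -/
def NAField.Attractor (F : NAField K) (a b : K) : Set (K × K) :=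
  ⋂ n ∈ {n : ℕ | 1 ≤ n}, (F.Tmap a b)^[n] '' unitPoly K

/-- The basin of attraction `B_T = ⋃_{n ≥ 1} T⁻ⁿ(R²)`. -/
def NAField.Basin (F : NAField K) (a b : K) : Set (K × K) :=
  ⋃ n ∈ {n : ℕ | 1 ≤ n}, (F.Tmap a b)^[n] ⁻¹' unitPoly K

/-- `T^k` for `k : ℤ`. -/
def NAField.iterZ (F : NAField K) (a b : K) (k : ℤ) : K × K → K × K :=
  if 0 ≤ k then (F.Tmap a b)^[k.toNat] else (F.Tinv a b)^[(-k).toNat]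

/-- The image under the conjugacy `ω` of the cylinder set of bisequences
agreeing with `s` on coordinates `-M, …, M`: points of the attractor whose
itinerary through the residue strips matches `s` on those coordinates. -/
def NAField.Cyl (F : NAField K) (a b : K) (s : ℤ → K) (M : ℕ) : Set (K × K) :=
  {p | p ∈ F.Attractor a b ∧
    ∀ k : ℤ, |k| ≤ (M : ℤ) → ‖(F.iterZ a b k p).1 - s k‖ ≤ ((F.q : ℝ))⁻¹}
namespace AttractorAux

variable {K : Type*} [NormedField K]

/-! ### Ultrametric toolkit -/

lemma na_add (F : NAField K) (x y : K) : ‖x + y‖ ≤ max ‖x‖ ‖y‖ := F.na x y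

lemma na_sub (F : NAField K) (x y : K) : ‖x - y‖ ≤ max ‖x‖ ‖y‖ := by
  simpa [sub_eq_add_neg] using F.na x (-y)

lemma na_eq (F : NAField K) {x y : K} (h : ‖y‖ < ‖x‖) : ‖x + y‖ = ‖x‖ := by
  refine le_antisymm ((F.na x y).trans (le_of_eq (max_eq_left h.le))) ?_
  by_contra hlt
  push_neg at hlt
  have h2 : ‖x‖ ≤ max ‖x + y‖ ‖y‖ := by
    have := F.na (x + y) (-y)
    simpa using this
  rcases max_cases ‖x + y‖ ‖y‖ with ⟨he, _⟩ | ⟨he, _⟩ <;> rw [he] at h2 <;> linarith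

lemma na_sum (F : NAField K) {ι : Type*} (t : Finset ι) (f : ι → K) (c : ℝ) (hc : 0 ≤ c)
    (h : ∀ i ∈ t, ‖f i‖ ≤ c) : ‖∑ i ∈ t, f i‖ ≤ c := by
  classical
  induction t using Finset.induction with
  | empty => simpa using hc
  | @insert i t hx ih =>
      rw [Finset.sum_insert hx]
      exact (na_add F _ _).trans (max_le (h i (by simp))
        (ih fun j hj => h j (by simp [hj])))

lemma hq1 (F : NAField K) : (1 : ℝ) < F.q := by exact_mod_cast F.one_lt_q
lemma hq0 (F : NAField K) : (0 : ℝ) < F.q := lt_trans one_pos (hq1 F)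
lemma hqi0 (F : NAField K) : (0 : ℝ) < (F.q : ℝ)⁻¹ := inv_pos.2 (hq0 F)
lemma hqi1 (F : NAField K) : ((F.q : ℝ))⁻¹ < 1 := by
  rw [inv_lt_one_iff₀]; right; exact hq1 F

lemma norm_eq_one (F : NAField K) {x : K} (hle : ‖x‖ ≤ 1) (hgt : (F.q : ℝ)⁻¹ < ‖x‖) :
    ‖x‖ = 1 := by
  have hx0 : x ≠ 0 := by
    intro h0
    rw [h0, norm_zero] at hgt
    exact absurd hgt (not_lt.2 (hqi0 F).le)
  obtain ⟨n, hn⟩ := F.valGroup x hx0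
  rw [hn] at hle hgt ⊢
  have h1 : n ≤ 0 := by
    have := (zpow_le_zpow_iff_right₀ (hq1 F) (m := n) (n := 0)).1 (by simpa using hle)
    simpa using this
  have h2 : 0 ≤ n := by
    by_contra hc
    push_neg at hc
    have hne : n ≤ -1 := by omega
    have := (zpow_le_zpow_iff_right₀ (hq1 F) (m := n) (n := -1)).2 hne
    rw [zpow_neg_one] at this
    linarith
  have : n = 0 := le_antisymm h1 h2
  simp [this]

/-! ### Residue representatives -/

noncomputable def repOf (F : NAField K) (x : K) : K :=
  if h : ‖x‖ ≤ 1 then Classical.choose (F.reps_cover x h) else 0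

lemma repOf_mem (F : NAField K) {x : K} (h : ‖x‖ ≤ 1) : repOf F x ∈ F.reps := by
  rw [repOf, dif_pos h]
  exact (Classical.choose_spec (F.reps_cover x h)).1

lemma repOf_close (F : NAField K) {x : K} (h : ‖x‖ ≤ 1) :
    ‖x - repOf F x‖ ≤ (F.q : ℝ)⁻¹ := by
  rw [repOf, dif_pos h]
  exact (Classical.choose_spec (F.reps_cover x h)).2

/-! ### `‖q‖ ≤ 1/q` (additive Lagrange) -/

lemma norm_q_le (F : NAField K) : ‖(F.q : K)‖ ≤ (F.q : ℝ)⁻¹ := by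
  classical
  set g : K → K := fun r => repOf F (1 + r) with hg
  have hmem : ∀ r ∈ F.reps, ‖1 + r‖ ≤ 1 := fun r hr =>
    (na_add F 1 r).trans (max_le (by simp) (F.norm_reps r hr))
  have hginj : ∀ r ∈ F.reps, ∀ r' ∈ F.reps, g r = g r' → r = r' := by
    intro r hr r' hr' he
    by_contra hne
    have h1 := repOf_close F (hmem r hr)
    have h2 := repOf_close F (hmem r' hr')
    have he' : repOf F (1 + r) = repOf F (1 + r') := he
    have hrr : r - r' = ((1 + r) - repOf F (1 + r)) - ((1 + r') - repOf F (1 + r')) := by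
      rw [he']; ring
    have : ‖r - r'‖ ≤ (F.q : ℝ)⁻¹ := by
      rw [hrr]
      exact (na_sub F _ _).trans (max_le h1 h2)
    exact absurd this (not_le.2 (F.reps_sep r hr r' hr' hne))
  have himg : Finset.image g F.reps = F.reps := by
    apply Finset.eq_of_subset_of_card_le
    · intro y hy
      rcases Finset.mem_image.1 hy with ⟨r, hr, rfl⟩
      exact repOf_mem F (hmem r hr)
    · rw [Finset.card_image_of_injOn
        (fun r hr r' hr' h => hginj r (by simpa using hr) r' (by simpa using hr') h)]
  have hsum : ∑ r ∈ F.reps, g r = ∑ r ∈ F.reps, r := by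
    have := Finset.sum_image (f := fun y : K => y) (g := g) (s := F.reps) hginj
    rw [himg] at this
    exact this.symm
  have key : (F.q : K) = ∑ r ∈ F.reps, ((1 + r) - g r) := by
    rw [Finset.sum_sub_distrib, hsum, Finset.sum_add_distrib, Finset.sum_const, F.card_reps]
    simp
  rw [key]
  exact na_sum F _ _ _ (hqi0 F).le fun r hr => repOf_close F (hmem r hr)

/-! ### Approximate products -/

lemma prod_approx (F : NAField K) {ι : Type*} (t : Finset ι) (f g : ι → K)
    (hf : ∀ i ∈ t, ‖f i‖ ≤ 1) (hg : ∀ i ∈ t, ‖g i‖ ≤ 1)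
    (hfg : ∀ i ∈ t, ‖f i - g i‖ ≤ (F.q : ℝ)⁻¹) :
    ‖∏ i ∈ t, f i - ∏ i ∈ t, g i‖ ≤ (F.q : ℝ)⁻¹ := by
  classical
  induction t using Finset.induction with
  | empty => simpa using (hqi0 F).le
  | @insert i t hx ih =>
      rw [Finset.prod_insert hx, Finset.prod_insert hx]
      have key : f i * ∏ j ∈ t, f j - g i * ∏ j ∈ t, g j
          = f i * (∏ j ∈ t, f j - ∏ j ∈ t, g j) + (f i - g i) * ∏ j ∈ t, g j := by ring
      rw [key]
      refine (na_add F _ _).trans (max_le ?_ ?_)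
      · rw [norm_mul]
        calc ‖f i‖ * ‖∏ j ∈ t, f j - ∏ j ∈ t, g j‖
            ≤ 1 * (F.q : ℝ)⁻¹ := by
              apply mul_le_mul (hf i (by simp))
                (ih (fun j hj => hf j (by simp [hj])) (fun j hj => hg j (by simp [hj]))
                  (fun j hj => hfg j (by simp [hj]))) (norm_nonneg _) zero_le_one
          _ = (F.q : ℝ)⁻¹ := one_mul _
      · rw [norm_mul]
        have hgp : ‖∏ j ∈ t, g j‖ ≤ 1 := by
          rw [norm_prod]
          exact Finset.prod_le_one (fun j _ => norm_nonneg _) (fun j hj => hg j (by simp [hj]))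
        calc ‖f i - g i‖ * ‖∏ j ∈ t, g j‖
            ≤ (F.q : ℝ)⁻¹ * 1 :=
              mul_le_mul (hfg i (by simp)) hgp (norm_nonneg _) (hqi0 F).le
          _ = (F.q : ℝ)⁻¹ := mul_one _

/-! ### The key congruence `‖x^q - x‖ ≤ 1/q` -/

lemma norm_pow_sub_self (F : NAField K) (x : K) (hx : ‖x‖ ≤ 1) :
    ‖x ^ F.q - x‖ ≤ (F.q : ℝ)⁻¹ := by
  classical
  rcases le_or_gt ‖x‖ ((F.q : ℝ))⁻¹ with h | h
  · refine (na_sub F _ _).trans (max_le ?_ h)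
    calc ‖x ^ F.q‖ = ‖x‖ ^ F.q := norm_pow x F.q
      _ ≤ ‖x‖ := pow_le_of_le_one (norm_nonneg x) hx (by have := F.one_lt_q; omega : F.q ≠ 0)
      _ ≤ _ := h
  · have hxe : ‖x‖ = 1 := norm_eq_one F hx h
    -- the unit representatives
    have h0le : ‖(0 : K)‖ ≤ 1 := by simp
    set r0 : K := repOf F 0 with hr0def
    have hr0mem : r0 ∈ F.reps := repOf_mem F h0le
    have hr0small : ‖r0‖ ≤ (F.q : ℝ)⁻¹ := by
      have := repOf_close F h0le
      rw [← hr0def] at this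
      simpa using this
    set U : Finset K := F.reps.erase r0 with hU
    have hUmem : ∀ r ∈ U, r ∈ F.reps := fun r hr => Finset.mem_of_mem_erase hr
    have hUnorm : ∀ r ∈ U, ‖r‖ = 1 := by
      intro r hr
      have hrm := hUmem r hr
      have hne : r ≠ r0 := Finset.ne_of_mem_erase hr
      have hbig : (F.q : ℝ)⁻¹ < ‖r‖ := by
        by_contra hc
        push_neg at hc
        have : ‖r - r0‖ ≤ (F.q : ℝ)⁻¹ := (na_sub F _ _).trans (max_le hc hr0small)
        exact absurd this (not_le.2 (F.reps_sep r hrm r0 hr0mem hne))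
      exact norm_eq_one F (F.norm_reps r hrm) hbig
    have hxr : ∀ r ∈ U, ‖x * r‖ ≤ 1 := by
      intro r hr
      rw [norm_mul, hxe, hUnorm r hr, one_mul]
    set g : K → K := fun r => repOf F (x * r) with hgdef
    have hclose : ∀ r ∈ U, ‖x * r - g r‖ ≤ (F.q : ℝ)⁻¹ := fun r hr => repOf_close F (hxr r hr)
    have hgnorm : ∀ r ∈ U, ‖g r‖ = 1 := by
      intro r hr
      have h1 : ‖x * r‖ = 1 := by rw [norm_mul, hxe, hUnorm r hr, one_mul]
      have h2 : ‖g r - x * r‖ < ‖x * r‖ := by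
        rw [norm_sub_rev, h1]
        exact lt_of_le_of_lt (hclose r hr) (hqi1 F)
      have h3 := na_eq F h2
      have h4 : x * r + (g r - x * r) = g r := by ring
      rw [h4, h1] at h3
      exact h3
    have hgU : ∀ r ∈ U, g r ∈ U := by
      intro r hr
      refine Finset.mem_erase.2 ⟨?_, repOf_mem F (hxr r hr)⟩
      intro he
      have := hgnorm r hr
      rw [he] at this
      rw [this] at hr0small
      linarith [hqi1 F]
    have hginj : ∀ r ∈ U, ∀ r' ∈ U, g r = g r' → r = r' := by
      intro r hr r' hr' he
      by_contra hne
      have h1 := hclose r hr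
      have h2 := hclose r' hr'
      have hxx : x * r - x * r' = (x * r - g r) - (x * r' - g r') := by rw [he]; ring
      have h3 : ‖x * r - x * r'‖ ≤ (F.q : ℝ)⁻¹ := by
        rw [hxx]
        exact (na_sub F _ _).trans (max_le h1 h2)
      have h4 : ‖r - r'‖ ≤ (F.q : ℝ)⁻¹ := by
        rw [← one_mul ‖r - r'‖, ← hxe, ← norm_mul, mul_sub]
        exact h3
      exact absurd h4 (not_le.2 (F.reps_sep r (hUmem r hr) r' (hUmem r' hr') hne))
    have himgU : Finset.image g U = U := by
      apply Finset.eq_of_subset_of_card_le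
      · intro y hy
        rcases Finset.mem_image.1 hy with ⟨r, hr, rfl⟩
        exact hgU r hr
      · rw [Finset.card_image_of_injOn
          (fun r hr r' hr' h => hginj r (by simpa using hr) r' (by simpa using hr') h)]
    have hprod : ∏ r ∈ U, g r = ∏ r ∈ U, r := by
      have := Finset.prod_image (f := fun y : K => y) (g := g) (s := U) hginj
      rw [himgU] at this
      exact this.symm
    have happrox : ‖∏ r ∈ U, (x * r) - ∏ r ∈ U, g r‖ ≤ (F.q : ℝ)⁻¹ :=
      prod_approx F U _ _ hxr (fun r hr => (hgnorm r hr).le) hclose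
    have hxpow : ∏ r ∈ U, (x * r) = x ^ U.card * ∏ r ∈ U, r := by
      rw [Finset.prod_mul_distrib, Finset.prod_const]
    have hPnorm : ‖∏ r ∈ U, r‖ = 1 := by
      rw [norm_prod]
      exact Finset.prod_eq_one fun r hr => hUnorm r hr
    have hfinal : ‖x ^ U.card - 1‖ ≤ (F.q : ℝ)⁻¹ := by
      have h5 : ‖(x ^ U.card - 1) * ∏ r ∈ U, r‖ ≤ (F.q : ℝ)⁻¹ := by
        have h6 : (x ^ U.card - 1) * ∏ r ∈ U, r = ∏ r ∈ U, (x * r) - ∏ r ∈ U, g r := by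
          rw [hprod, hxpow]; ring
        rw [h6]
        exact happrox
      rwa [norm_mul, hPnorm, mul_one] at h5
    have hcard : U.card = F.q - 1 := by
      rw [hU, Finset.card_erase_of_mem hr0mem, F.card_reps]
    have hfact : x ^ F.q - x = x * (x ^ (F.q - 1) - 1) := by
      rw [mul_sub, mul_one, ← pow_succ']
      congr 2
      have := F.one_lt_q
      omega
    rw [hfact, norm_mul, hxe, one_mul, ← hcard]
    exact hfinal

/-! ### Power differences -/

lemma norm_pow_sub_pow_le (F : NAField K) (x y : K) (hx : ‖x‖ ≤ 1) (hy : ‖y‖ ≤ 1) :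
    ∀ j : ℕ, ‖x ^ j - y ^ j‖ ≤ ‖x - y‖ := by
  intro j
  induction j with
  | zero => simp
  | succ j ih =>
      have key : x ^ (j + 1) - y ^ (j + 1) = x * (x ^ j - y ^ j) + (x - y) * y ^ j := by ring
      rw [key]
      refine (na_add F _ _).trans (max_le ?_ ?_)
      · rw [norm_mul]
        calc ‖x‖ * ‖x ^ j - y ^ j‖ ≤ 1 * ‖x - y‖ :=
              mul_le_mul hx ih (norm_nonneg _) zero_le_one
          _ = ‖x - y‖ := one_mul _
      · rw [norm_mul]
        calc ‖x - y‖ * ‖y ^ j‖ ≤ ‖x - y‖ * 1 := by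
              apply mul_le_mul_of_nonneg_left _ (norm_nonneg _)
              rw [norm_pow]
              exact pow_le_one₀ (norm_nonneg _) hy
          _ = ‖x - y‖ := mul_one _

lemma norm_powq_sub (F : NAField K) (x y : K) (hx : ‖x‖ ≤ 1) (hy : ‖y‖ ≤ 1)
    (hxy : ‖x - y‖ ≤ (F.q : ℝ)⁻¹) :
    ‖x ^ F.q - y ^ F.q‖ ≤ (F.q : ℝ)⁻¹ * ‖x - y‖ := by
  classical
  set S : K := ∑ i ∈ Finset.range F.q, x ^ i * y ^ (F.q - 1 - i) with hS
  have hSx : S * (x - y) = x ^ F.q - y ^ F.q := geom_sum₂_mul x y F.q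
  have hSnorm : ‖S‖ ≤ (F.q : ℝ)⁻¹ := by
    have h1 : ‖S - (F.q : K) * x ^ (F.q - 1)‖ ≤ (F.q : ℝ)⁻¹ := by
      have hexp : S - (F.q : K) * x ^ (F.q - 1)
          = ∑ i ∈ Finset.range F.q, (x ^ i * y ^ (F.q - 1 - i) - x ^ (F.q - 1)) := by
        rw [Finset.sum_sub_distrib, Finset.sum_const, Finset.card_range, nsmul_eq_mul, hS]
      rw [hexp]
      refine na_sum F _ _ _ (hqi0 F).le ?_
      intro i hi
      have hi' : i < F.q := Finset.mem_range.1 hi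
      have hsplit : x ^ (F.q - 1) = x ^ i * x ^ (F.q - 1 - i) := by
        rw [← pow_add]
        congr 1
        omega
      rw [hsplit, ← mul_sub, norm_mul]
      calc ‖x ^ i‖ * ‖y ^ (F.q - 1 - i) - x ^ (F.q - 1 - i)‖
          ≤ 1 * ‖y - x‖ := by
            apply mul_le_mul _ (norm_pow_sub_pow_le F y x hy hx _) (norm_nonneg _) zero_le_one
            rw [norm_pow]
            exact pow_le_one₀ (norm_nonneg _) hx
        _ = ‖y - x‖ := one_mul _
        _ = ‖x - y‖ := norm_sub_rev y x
        _ ≤ _ := hxy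
    have h2 : ‖(F.q : K) * x ^ (F.q - 1)‖ ≤ (F.q : ℝ)⁻¹ := by
      rw [norm_mul]
      calc ‖(F.q : K)‖ * ‖x ^ (F.q - 1)‖ ≤ (F.q : ℝ)⁻¹ * 1 := by
            apply mul_le_mul (norm_q_le F) _ (norm_nonneg _) (hqi0 F).le
            rw [norm_pow]
            exact pow_le_one₀ (norm_nonneg _) hx
        _ = (F.q : ℝ)⁻¹ := mul_one _
    have hdecomp : S = (S - (F.q : K) * x ^ (F.q - 1)) + (F.q : K) * x ^ (F.q - 1) := by ring
    rw [hdecomp]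
    exact (na_add F _ _).trans (max_le h1 h2)
  calc ‖x ^ F.q - y ^ F.q‖ = ‖S‖ * ‖x - y‖ := by rw [← hSx, norm_mul]
    _ ≤ (F.q : ℝ)⁻¹ * ‖x - y‖ := mul_le_mul_of_nonneg_right hSnorm (norm_nonneg _)

lemma norm_f_sub (F : NAField K) (x y : K) (hx : ‖x‖ ≤ 1) (hy : ‖y‖ ≤ 1)
    (hxy : ‖x - y‖ ≤ (F.q : ℝ)⁻¹) :
    ‖(x ^ F.q - x) - (y ^ F.q - y)‖ = ‖x - y‖ := by
  rcases eq_or_ne x y with rfl | hne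
  · simp
  · have hpos : 0 < ‖x - y‖ := by
      rw [norm_pos_iff, sub_ne_zero]
      exact hne
    have h1 : ‖x ^ F.q - y ^ F.q‖ < ‖x - y‖ := by
      refine lt_of_le_of_lt (norm_powq_sub F x y hx hy hxy) ?_
      nlinarith [hqi1 F, hqi0 F]
    have hre : (x ^ F.q - x) - (y ^ F.q - y) = (-(x - y)) + (x ^ F.q - y ^ F.q) := by ring
    rw [hre, na_eq F (by rw [norm_neg]; exact h1), norm_neg]

end AttractorAux
namespace AttractorAux

variable {K : Type*} [NormedField K]

/-! ### Orbits -/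

def IsOrbit (F : NAField K) (a b : K) (u : ℤ → K) : Prop :=
  (∀ k, ‖u k‖ ≤ 1) ∧ ∀ k : ℤ, u (k + 1) = a * u (k - 1) + b * ((u k) ^ F.q - u k)

lemma orbit_iterate (F : NAField K) (a b : K) {u : ℤ → K} (h : IsOrbit F a b u)
    (m : ℤ) (n : ℕ) :
    (F.Tmap a b)^[n] (u m, u (m - 1)) = (u (m + n), u (m + n - 1)) := by
  induction n with
  | zero => simp
  | succ n ih =>
      rw [Function.iterate_succ_apply', ih]
      have h1 : F.Tmap a b (u (m + n), u (m + n - 1))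
          = (a * u (m + n - 1) + b * ((u (m + n)) ^ F.q - u (m + n)), u (m + n)) := rfl
      rw [h1, ← h.2 (m + n)]
      have e1 : m + (n : ℤ) + 1 = m + ((n : ℕ) + 1 : ℕ) := by push_cast; ring
      have e2 : m + (n : ℤ) = m + ((n : ℕ) + 1 : ℕ) - 1 := by push_cast; ring
      rw [e1, e2]

lemma orbit_mem (F : NAField K) (a b : K) {u : ℤ → K} (h : IsOrbit F a b u) (m : ℤ) :
    (u m, u (m - 1)) ∈ F.Attractor a b := by
  rw [NAField.Attractor]
  refine Set.mem_iInter₂.2 fun n hn => ?_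
  refine ⟨(u (m - n), u (m - n - 1)), ⟨h.1 _, h.1 _⟩, ?_⟩
  rw [orbit_iterate F a b h (m - n) n]
  have e1 : m - (n : ℤ) + n = m := by ring
  rw [e1]

lemma orbit_shift (F : NAField K) (a b : K) {u : ℤ → K} (h : IsOrbit F a b u) (N : ℤ) :
    IsOrbit F a b (fun k => u (k + N)) := by
  refine ⟨fun k => h.1 _, fun k => ?_⟩
  have := h.2 (k + N)
  simpa [show k + 1 + N = k + N + 1 by ring, show k - 1 + N = k + N - 1 by ring] using this

/-! ### Expansivity -/

lemma expansive (F : NAField K) (a b : K) (ha : ‖a‖ < 1) (hb : ‖b‖ = (F.q : ℝ))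
    {u v : ℤ → K} (hu : IsOrbit F a b u) (hv : IsOrbit F a b v) (M : ℕ)
    (hcl : ∀ k : ℤ, |k| ≤ (M : ℤ) → ‖u k - v k‖ ≤ (F.q : ℝ)⁻¹) :
    ∀ j : ℕ, ∀ k : ℤ, |k| + j ≤ (M : ℤ) → ‖u k - v k‖ ≤ ((F.q : ℝ)⁻¹) ^ (j + 1) := by
  intro j
  induction j with
  | zero =>
      intro k hk
      simpa using hcl k (by simpa using hk)
  | succ j ih =>
      intro k hk
      have habs : (0:ℤ) ≤ |k| := abs_nonneg k
      have hk' : |k| ≤ (M : ℤ) := by omega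
      have hsmall : ‖u k - v k‖ ≤ (F.q : ℝ)⁻¹ := hcl k hk'
      -- the key identity
      have hrec : u (k + 1) - v (k + 1)
          = a * (u (k - 1) - v (k - 1)) + b * (((u k) ^ F.q - u k) - ((v k) ^ F.q - v k)) := by
        rw [hu.2 k, hv.2 k]; ring
      have hiden : b * (((u k) ^ F.q - u k) - ((v k) ^ F.q - v k))
          = (u (k + 1) - v (k + 1)) - a * (u (k - 1) - v (k - 1)) := by
        rw [hrec]; ring
      have hnorm : (F.q : ℝ) * ‖u k - v k‖
          = ‖(u (k + 1) - v (k + 1)) - a * (u (k - 1) - v (k - 1))‖ := by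
        rw [← hiden, norm_mul, hb, norm_f_sub F (u k) (v k) (hu.1 k) (hv.1 k) hsmall]
      have hnb1 : ‖u (k + 1) - v (k + 1)‖ ≤ ((F.q : ℝ)⁻¹) ^ (j + 1) := by
        apply ih (k + 1)
        have : |k + 1| ≤ |k| + 1 := abs_add_le k 1
        omega
      have hnb2 : ‖u (k - 1) - v (k - 1)‖ ≤ ((F.q : ℝ)⁻¹) ^ (j + 1) := by
        apply ih (k - 1)
        have : |k - 1| ≤ |k| + 1 := by
          calc |k - 1| = |k + (-1)| := by ring_nf
            _ ≤ |k| + |(-1 : ℤ)| := abs_add_le k (-1)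
            _ = |k| + 1 := by norm_num
        omega
      have hmax : ‖(u (k + 1) - v (k + 1)) - a * (u (k - 1) - v (k - 1))‖
          ≤ ((F.q : ℝ)⁻¹) ^ (j + 1) := by
        refine (na_sub F _ _).trans (max_le hnb1 ?_)
        rw [norm_mul]
        calc ‖a‖ * ‖u (k - 1) - v (k - 1)‖ ≤ 1 * (((F.q : ℝ)⁻¹) ^ (j + 1)) :=
              mul_le_mul ha.le hnb2 (norm_nonneg _) zero_le_one
          _ = ((F.q : ℝ)⁻¹) ^ (j + 1) := one_mul _
      have hq0' := hq0 F
      rw [← hnorm] at hmax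
      have he : ((F.q : ℝ)⁻¹) ^ (j + 1 + 1) = ((F.q : ℝ)⁻¹) ^ (j + 1) * (F.q : ℝ)⁻¹ := by
        rw [pow_succ]
      rw [he, ← mul_le_mul_iff_right₀ hq0']
      calc (F.q : ℝ) * ‖u k - v k‖ ≤ ((F.q : ℝ)⁻¹) ^ (j + 1) := hmax
        _ = (F.q : ℝ) * (((F.q : ℝ)⁻¹) ^ (j + 1) * (F.q : ℝ)⁻¹) := by
            rw [mul_comm (((F.q : ℝ)⁻¹) ^ (j + 1)) ((F.q : ℝ)⁻¹), ← mul_assoc,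
              mul_inv_cancel₀ hq0'.ne', one_mul]

lemma orbit_eq (F : NAField K) (a b : K) (ha : ‖a‖ < 1) (hb : ‖b‖ = (F.q : ℝ))
    {u v : ℤ → K} (hu : IsOrbit F a b u) (hv : IsOrbit F a b v)
    (hcl : ∀ k : ℤ, ‖u k - v k‖ ≤ (F.q : ℝ)⁻¹) : u = v := by
  funext k
  have hbd : ∀ j : ℕ, ‖u k - v k‖ ≤ ((F.q : ℝ)⁻¹) ^ (j + 1) := by
    intro j
    have habs : (0:ℤ) ≤ |k| := abs_nonneg k
    refine expansive F a b ha hb hu hv (|k| + j).toNat (fun k' _ => hcl k') j k ?_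
    omega
  have htend : Filter.Tendsto (fun j : ℕ => ((F.q : ℝ)⁻¹) ^ (j + 1)) Filter.atTop (nhds 0) := by
    have h0 := tendsto_pow_atTop_nhds_zero_of_lt_one (hqi0 F).le (hqi1 F)
    exact h0.comp (Filter.tendsto_add_atTop_nat 1)
  have hle : ‖u k - v k‖ ≤ 0 := ge_of_tendsto htend (Filter.Eventually.of_forall hbd)
  have : u k - v k = 0 := by
    have := le_antisymm hle (norm_nonneg _)
    rwa [norm_eq_zero] at this
  exact sub_eq_zero.1 this

end AttractorAux
namespace AttractorAux

variable {K : Type*} [NormedField K]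

/-! ### Construction of orbits with prescribed itinerary -/

noncomputable def orbIter (F : NAField K) (a b : K) (s : ℤ → K) : ℕ → ℤ → K
  | 0 => s
  | n + 1 => fun k =>
      (orbIter F a b s n k) ^ F.q
        - (orbIter F a b s n (k + 1) - a * orbIter F a b s n (k - 1)) / b

lemma orbIter_bounds (F : NAField K) (a b : K) (ha : ‖a‖ < 1) (hb : ‖b‖ = (F.q : ℝ))
    (s : ℤ → K) (hs : ∀ k, ‖s k‖ ≤ 1) :
    ∀ n k, ‖orbIter F a b s n k - s k‖ ≤ (F.q : ℝ)⁻¹ ∧ ‖orbIter F a b s n k‖ ≤ 1 := by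
  have hb0 : (0:ℝ) < ‖b‖ := by rw [hb]; exact hq0 F
  intro n
  induction n with
  | zero =>
      intro k
      refine ⟨?_, hs k⟩
      show ‖s k - s k‖ ≤ (F.q : ℝ)⁻¹
      rw [sub_self, norm_zero]
      exact (hqi0 F).le
  | succ n ih =>
      intro k
      have hstrip : ‖orbIter F a b s (n + 1) k - s k‖ ≤ (F.q : ℝ)⁻¹ := by
        have hX := (ih k).2
        have hdecomp : orbIter F a b s (n + 1) k - s k
            = ((orbIter F a b s n k) ^ F.q - orbIter F a b s n k)
              + ((orbIter F a b s n k - s k)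
                + (-((orbIter F a b s n (k + 1) - a * orbIter F a b s n (k - 1)) / b))) := by
          show (orbIter F a b s n k) ^ F.q
              - (orbIter F a b s n (k + 1) - a * orbIter F a b s n (k - 1)) / b - s k = _
          ring
        rw [hdecomp]
        refine (na_add F _ _).trans (max_le (norm_pow_sub_self F _ hX) ?_)
        refine (na_add F _ _).trans (max_le (ih k).1 ?_)
        rw [norm_neg, norm_div, hb]
        have hnum : ‖orbIter F a b s n (k + 1) - a * orbIter F a b s n (k - 1)‖ ≤ 1 := by
          refine (na_sub F _ _).trans (max_le (ih (k + 1)).2 ?_)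
          rw [norm_mul]
          calc ‖a‖ * ‖orbIter F a b s n (k - 1)‖ ≤ 1 * 1 :=
                mul_le_mul ha.le (ih (k - 1)).2 (norm_nonneg _) zero_le_one
            _ = 1 := one_mul _
        rw [div_le_iff₀ (hq0 F)]
        calc ‖orbIter F a b s n (k + 1) - a * orbIter F a b s n (k - 1)‖ ≤ 1 := hnum
          _ = (F.q : ℝ)⁻¹ * (F.q : ℝ) := by
            rw [inv_mul_cancel₀ (hq0 F).ne']
      refine ⟨hstrip, ?_⟩
      have : orbIter F a b s (n + 1) k = (orbIter F a b s (n + 1) k - s k) + s k := by ring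
      rw [this]
      exact (na_add F _ _).trans (max_le (hstrip.trans (hqi1 F).le) (hs k))

lemma orbIter_step (F : NAField K) (a b : K) (ha : ‖a‖ < 1) (hb : ‖b‖ = (F.q : ℝ))
    (s : ℤ → K) (hs : ∀ k, ‖s k‖ ≤ 1) :
    ∀ n k, ‖orbIter F a b s (n + 1) k - orbIter F a b s n k‖ ≤ ((F.q : ℝ)⁻¹) ^ (n + 1) := by
  intro n
  induction n with
  | zero =>
      intro k
      have h1 := (orbIter_bounds F a b ha hb s hs 1 k).1
      show ‖orbIter F a b s 1 k - s k‖ ≤ ((F.q : ℝ)⁻¹) ^ 1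
      rw [pow_one]
      exact h1
  | succ n ih =>
      intro k
      have hbd := orbIter_bounds F a b ha hb s hs
      have hdecomp : orbIter F a b s (n + 2) k - orbIter F a b s (n + 1) k
          = ((orbIter F a b s (n + 1) k) ^ F.q - (orbIter F a b s n k) ^ F.q)
            + (-(((orbIter F a b s (n + 1) (k + 1) - orbIter F a b s n (k + 1))
                - a * (orbIter F a b s (n + 1) (k - 1) - orbIter F a b s n (k - 1))) / b)) := by
        show (orbIter F a b s (n + 1) k) ^ F.q
            - (orbIter F a b s (n + 1) (k + 1) - a * orbIter F a b s (n + 1) (k - 1)) / b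
            - ((orbIter F a b s n k) ^ F.q
              - (orbIter F a b s n (k + 1) - a * orbIter F a b s n (k - 1)) / b) = _
        field_simp
        ring
      rw [hdecomp]
      have hdiff_small : ‖orbIter F a b s (n + 1) k - orbIter F a b s n k‖ ≤ (F.q : ℝ)⁻¹ := by
        refine (ih k).trans ?_
        calc ((F.q : ℝ)⁻¹) ^ (n + 1) ≤ ((F.q : ℝ)⁻¹) ^ 1 :=
              pow_le_pow_of_le_one (hqi0 F).le (hqi1 F).le (by omega)
          _ = (F.q : ℝ)⁻¹ := pow_one _
      refine (na_add F _ _).trans (max_le ?_ ?_)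
      · calc ‖(orbIter F a b s (n + 1) k) ^ F.q - (orbIter F a b s n k) ^ F.q‖
            ≤ (F.q : ℝ)⁻¹ * ‖orbIter F a b s (n + 1) k - orbIter F a b s n k‖ :=
              norm_powq_sub F _ _ (hbd (n + 1) k).2 (hbd n k).2 hdiff_small
          _ ≤ (F.q : ℝ)⁻¹ * ((F.q : ℝ)⁻¹) ^ (n + 1) :=
              mul_le_mul_of_nonneg_left (ih k) (hqi0 F).le
          _ = ((F.q : ℝ)⁻¹) ^ (n + 1 + 1) := by rw [pow_succ]; ring
      · rw [norm_neg, norm_div, hb]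
        have hnum : ‖(orbIter F a b s (n + 1) (k + 1) - orbIter F a b s n (k + 1))
            - a * (orbIter F a b s (n + 1) (k - 1) - orbIter F a b s n (k - 1))‖
            ≤ ((F.q : ℝ)⁻¹) ^ (n + 1) := by
          refine (na_sub F _ _).trans (max_le (ih (k + 1)) ?_)
          rw [norm_mul]
          calc ‖a‖ * ‖orbIter F a b s (n + 1) (k - 1) - orbIter F a b s n (k - 1)‖
              ≤ 1 * ((F.q : ℝ)⁻¹) ^ (n + 1) :=
                mul_le_mul ha.le (ih (k - 1)) (norm_nonneg _) zero_le_one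
            _ = _ := one_mul _
        rw [div_le_iff₀ (hq0 F)]
        calc ‖(orbIter F a b s (n + 1) (k + 1) - orbIter F a b s n (k + 1))
            - a * (orbIter F a b s (n + 1) (k - 1) - orbIter F a b s n (k - 1))‖
            ≤ ((F.q : ℝ)⁻¹) ^ (n + 1) := hnum
          _ = ((F.q : ℝ)⁻¹) ^ (n + 1 + 1) * (F.q : ℝ) := by
            rw [pow_succ ((F.q : ℝ)⁻¹) (n + 1), mul_assoc,
              inv_mul_cancel₀ (hq0 F).ne', mul_one]

lemma exists_orbit (F : NAField K) (a b : K) (ha : ‖a‖ < 1) (hb : ‖b‖ = (F.q : ℝ))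
    (s : ℤ → K) (hs : ∀ k, ‖s k‖ ≤ 1) :
    ∃ u : ℤ → K, IsOrbit F a b u ∧ ∀ k, ‖u k - s k‖ ≤ (F.q : ℝ)⁻¹ := by
  haveI := F.complete
  have hb0 : b ≠ 0 := by
    intro h
    rw [h, norm_zero] at hb
    linarith [hq0 F]
  have hc : ∀ k : ℤ, ∃ L : K, Filter.Tendsto (fun n => orbIter F a b s n k)
      Filter.atTop (nhds L) := by
    intro k
    apply cauchySeq_tendsto_of_complete
    apply cauchySeq_of_le_geometric ((F.q : ℝ)⁻¹) 1 (hqi1 F)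
    intro n
    rw [dist_eq_norm, norm_sub_rev]
    calc ‖orbIter F a b s (n + 1) k - orbIter F a b s n k‖ ≤ ((F.q : ℝ)⁻¹) ^ (n + 1) :=
          orbIter_step F a b ha hb s hs n k
      _ ≤ 1 * ((F.q : ℝ)⁻¹) ^ n := by
        rw [one_mul, pow_succ]
        calc ((F.q : ℝ)⁻¹) ^ n * (F.q : ℝ)⁻¹ ≤ ((F.q : ℝ)⁻¹) ^ n * 1 :=
              mul_le_mul_of_nonneg_left (hqi1 F).le (pow_nonneg (hqi0 F).le n)
          _ = ((F.q : ℝ)⁻¹) ^ n := mul_one _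
  choose u hu using hc
  have hstrip : ∀ k, ‖u k - s k‖ ≤ (F.q : ℝ)⁻¹ := by
    intro k
    have ht : Filter.Tendsto (fun n => ‖orbIter F a b s n k - s k‖) Filter.atTop
        (nhds ‖u k - s k‖) := ((hu k).sub tendsto_const_nhds).norm
    exact le_of_tendsto ht (Filter.Eventually.of_forall fun n =>
      (orbIter_bounds F a b ha hb s hs n k).1)
  have hbound : ∀ k, ‖u k‖ ≤ 1 := by
    intro k
    exact le_of_tendsto (hu k).norm (Filter.Eventually.of_forall fun n =>
      (orbIter_bounds F a b ha hb s hs n k).2)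
  refine ⟨u, ⟨hbound, ?_⟩, hstrip⟩
  intro k
  have h1 : Filter.Tendsto (fun n => orbIter F a b s (n + 1) k) Filter.atTop (nhds (u k)) :=
    (hu k).comp (Filter.tendsto_add_atTop_nat 1)
  have h2 : Filter.Tendsto
      (fun n => (orbIter F a b s n k) ^ F.q
        - (orbIter F a b s n (k + 1) - a * orbIter F a b s n (k - 1)) / b)
      Filter.atTop (nhds ((u k) ^ F.q - (u (k + 1) - a * u (k - 1)) / b)) :=
    ((hu k).pow F.q).sub (((hu (k + 1)).sub ((hu (k - 1)).const_mul a)).div_const b)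
  have heq : u k = (u k) ^ F.q - (u (k + 1) - a * u (k - 1)) / b :=
    tendsto_nhds_unique h1 h2
  have heq2 := congrArg (fun t => b * t) heq
  rw [mul_sub, mul_div_cancel₀ _ hb0] at heq2
  linear_combination heq2

/-! ### From attractor membership to orbits -/

lemma Tinv_Tmap (F : NAField K) (a b : K) (ha0 : a ≠ 0) (z : K × K) :
    F.Tinv a b (F.Tmap a b z) = z := by
  unfold NAField.Tinv NAField.Tmap
  simp only
  ext
  · rfl
  · show a⁻¹ * (a * z.2 + b * (z.1 ^ F.q - z.1) - b * (z.1 ^ F.q - z.1)) = z.2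
    field_simp
    ring

lemma Tmap_Tinv (F : NAField K) (a b : K) (ha0 : a ≠ 0) (z : K × K) :
    F.Tmap a b (F.Tinv a b z) = z := by
  unfold NAField.Tinv NAField.Tmap
  simp only
  ext
  · show a * (a⁻¹ * (z.1 - b * (z.2 ^ F.q - z.2))) + b * (z.2 ^ F.q - z.2) = z.1
    field_simp
    ring
  · rfl

lemma Tmap_mem_unitPoly (F : NAField K) (a b : K) (ha : ‖a‖ < 1) (hb : ‖b‖ = (F.q : ℝ))
    {z : K × K} (hz : z ∈ unitPoly K) : F.Tmap a b z ∈ unitPoly K := by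
  obtain ⟨h1, h2⟩ := hz
  refine ⟨?_, h1⟩
  refine (na_add F _ _).trans (max_le ?_ ?_)
  · rw [norm_mul]
    calc ‖a‖ * ‖z.2‖ ≤ 1 * 1 := mul_le_mul ha.le h2 (norm_nonneg _) zero_le_one
      _ = 1 := one_mul _
  · rw [norm_mul, hb]
    calc (F.q : ℝ) * ‖z.1 ^ F.q - z.1‖ ≤ (F.q : ℝ) * (F.q : ℝ)⁻¹ :=
          mul_le_mul_of_nonneg_left (norm_pow_sub_self F _ h1) (hq0 F).le
      _ = 1 := mul_inv_cancel₀ (hq0 F).ne'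

lemma orbit_of_mem (F : NAField K) (a b : K) (ha0 : a ≠ 0) (ha : ‖a‖ < 1)
    (hb : ‖b‖ = (F.q : ℝ)) {p : K × K} (hp : p ∈ F.Attractor a b) :
    ∃ u : ℤ → K, IsOrbit F a b u ∧ u 0 = p.1 ∧ u (-1) = p.2 := by
  classical
  have hinv : ∀ n : ℕ, 1 ≤ n → (F.Tinv a b)^[n] p ∈ unitPoly K := by
    intro n hn
    have hmem := Set.mem_iInter₂.1 (by rwa [NAField.Attractor] at hp) n hn
    rcases hmem with ⟨w, hw, hwp⟩
    have hwp2 : (F.Tinv a b)^[n] p = w := by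
      rw [← hwp]
      exact (Function.LeftInverse.iterate (Tinv_Tmap F a b ha0) n) w
    rw [hwp2]
    exact hw
  have hp1 : p ∈ unitPoly K := by
    have h1 := hinv 1 le_rfl
    have h2 : p = F.Tmap a b ((F.Tinv a b)^[1] p) := by
      rw [Function.iterate_one, Tmap_Tinv F a b ha0]
    rw [h2]
    exact Tmap_mem_unitPoly F a b ha hb h1
  have hfwd : ∀ n : ℕ, (F.Tmap a b)^[n] p ∈ unitPoly K := by
    intro n
    induction n with
    | zero => exact hp1
    | succ n ih =>
        rw [Function.iterate_succ_apply']
        exact Tmap_mem_unitPoly F a b ha hb ih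
  set v : ℤ → K × K := fun k =>
    if 0 ≤ k then (F.Tmap a b)^[k.toNat] p else (F.Tinv a b)^[(-k).toNat] p with hvdef
  have hv : ∀ k : ℤ, v k = if 0 ≤ k then (F.Tmap a b)^[k.toNat] p
      else (F.Tinv a b)^[(-k).toNat] p := fun _ => rfl
  have hvmem : ∀ k, v k ∈ unitPoly K := by
    intro k
    rw [hv k]
    split
    · exact hfwd _
    · rename_i hneg
      exact hinv _ (by omega)
  have hstep : ∀ k : ℤ, v (k + 1) = F.Tmap a b (v k) := by
    intro k
    rcases lt_trichotomy k (-1) with h | h | h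
    · rw [hv (k + 1), hv k, if_neg (by omega), if_neg (by omega)]
      have h2 : (-k).toNat = (-(k + 1)).toNat + 1 := by omega
      rw [h2, Function.iterate_succ_apply', Tmap_Tinv F a b ha0]
    · subst h
      rw [hv ((-1 : ℤ) + 1), hv (-1 : ℤ), if_pos (by omega : (0:ℤ) ≤ -1 + 1),
        if_neg (by omega : ¬ (0:ℤ) ≤ -1)]
      have h2 : ((-1 : ℤ) + 1).toNat = 0 := by omega
      have h3 : (-(-1 : ℤ)).toNat = 1 := by omega
      rw [h2, h3, Function.iterate_zero_apply, Function.iterate_one, Tmap_Tinv F a b ha0]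
    · rw [hv (k + 1), hv k, if_pos (by omega), if_pos (by omega)]
      have h2 : (k + 1).toNat = k.toNat + 1 := by omega
      rw [h2, Function.iterate_succ_apply']
  refine ⟨fun k => (v k).1, ⟨fun k => (hvmem k).1, ?_⟩, ?_, ?_⟩
  · intro k
    have h1 := hstep k
    have h2 := hstep (k - 1)
    rw [sub_add_cancel] at h2
    have h3 : (v k).2 = (v (k - 1)).1 := by rw [h2]; rfl
    show (v (k + 1)).1 = a * (v (k - 1)).1 + b * ((v k).1 ^ F.q - (v k).1)
    rw [h1]
    show a * (v k).2 + b * ((v k).1 ^ F.q - (v k).1) = _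
    rw [h3]
  · show (v 0).1 = p.1
    rw [hv 0, if_pos le_rfl]
    simp
  · show (v (-1)).1 = p.2
    rw [hv (-1 : ℤ), if_neg (by omega)]
    have h3 : (-(-1 : ℤ)).toNat = 1 := by omega
    rw [h3, Function.iterate_one]
    rfl

end AttractorAux
namespace AttractorAux

variable {K : Type*} [NormedField K]

/-- A bisequence of representatives in which every finite pattern of
representatives occurs at a nonnegative position. -/
lemma exists_universal (F : NAField K) :
    ∃ sstar : ℤ → K, (∀ m, sstar m ∈ F.reps) ∧
      ∀ (M : ℕ) (σ : ℤ → K), (∀ k : ℤ, |k| ≤ (M : ℤ) → σ k ∈ F.reps) →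
        ∃ n : ℕ, ∀ k : ℤ, |k| ≤ (M : ℤ) → sstar ((n : ℤ) + k) = σ k := by
  classical
  have hne : F.reps.Nonempty := Finset.card_pos.1 (by rw [F.card_reps]; have := F.one_lt_q; omega)
  obtain ⟨d0, hd0⟩ := hne
  set d : {x : K // x ∈ F.reps} := ⟨d0, hd0⟩ with hd
  haveI : Nonempty (List {x : K // x ∈ F.reps}) := ⟨[]⟩
  obtain ⟨e, he⟩ := exists_surjective_nat (List {x : K // x ∈ F.reps})
  set len : ℕ → ℕ := fun j => (e j).length with hlen
  set o : ℕ → ℕ := fun j => ∑ i ∈ Finset.range j, (len i + 1) with ho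
  have hosucc : ∀ j, o (j + 1) = o j + (len j + 1) := fun j => Finset.sum_range_succ _ j
  have hmono : ∀ {j j'}, j ≤ j' → o j ≤ o j' := fun h =>
    Finset.sum_le_sum_of_subset (Finset.range_subset_range.2 h)
  have hlt : ∀ j i j', i < len j → j < j' → o j + i < o j' := by
    intro j i j' hi h
    have h1 : o (j + 1) ≤ o j' := hmono h
    rw [hosucc j] at h1
    omega
  have huniq : ∀ j i j' i', i < len j → i' < len j' → o j + i = o j' + i' →
      j = j' ∧ i = i' := by
    intro j i j' i' hi hi' heq
    rcases lt_trichotomy j j' with h | h | h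
    · exfalso
      have h1 := hlt j i j' hi h
      have h2 : o j' ≤ o j' + i' := Nat.le_add_right _ _
      omega
    · subst h
      exact ⟨rfl, by omega⟩
    · exfalso
      have h1 := hlt j' i' j hi' h
      have h2 : o j ≤ o j + i := Nat.le_add_right _ _
      omega
  set W : ℕ → ℕ → K := fun j i => (((e j).getD i d : {x : K // x ∈ F.reps}) : K) with hWdef
  have hW : ∀ j i, W j i = (((e j).getD i d : {x : K // x ∈ F.reps}) : K) := fun _ _ => rfl
  set sstar : ℤ → K := fun m =>
    if h : ∃ jp : ℕ × ℕ, jp.2 < len jp.1 ∧ ((o jp.1 + jp.2 : ℕ) : ℤ) = m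
    then W h.choose.1 h.choose.2 else (d : K) with hssdef
  have hss : ∀ m : ℤ, sstar m =
      if h : ∃ jp : ℕ × ℕ, jp.2 < len jp.1 ∧ ((o jp.1 + jp.2 : ℕ) : ℤ) = m
      then W h.choose.1 h.choose.2 else (d : K) := fun _ => rfl
  have hWmem : ∀ j i, W j i ∈ F.reps := fun j i => ((e j).getD i d).2
  have hmem : ∀ m, sstar m ∈ F.reps := by
    intro m
    rw [hss m]
    split
    · exact hWmem _ _
    · exact d.2
  have hspec : ∀ j i, i < len j → sstar ((o j + i : ℕ) : ℤ) = W j i := by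
    intro j i hi
    have hex : ∃ jp : ℕ × ℕ, jp.2 < len jp.1 ∧ ((o jp.1 + jp.2 : ℕ) : ℤ) = ((o j + i : ℕ) : ℤ) :=
      ⟨(j, i), hi, rfl⟩
    rw [hss _, dif_pos hex]
    obtain ⟨h1, h2⟩ := hex.choose_spec
    have h3 : o hex.choose.1 + hex.choose.2 = o j + i := by exact_mod_cast h2
    obtain ⟨hj, hi2⟩ := huniq _ _ _ _ h1 hi h3
    rw [hj, hi2]
  refine ⟨sstar, hmem, ?_⟩
  intro M σ hσ
  set l : List {x : K // x ∈ F.reps} :=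
    List.ofFn (fun i : Fin (2 * M + 1) =>
      (⟨σ (((i : ℕ) : ℤ) - (M : ℤ)), hσ _ (by
        have hlt := i.isLt
        rw [abs_le]
        omega)⟩ : {x : K // x ∈ F.reps})) with hl
  obtain ⟨j, hj⟩ := he l
  refine ⟨o j + M, ?_⟩
  intro k hk
  rw [abs_le] at hk
  have hlenj : len j = 2 * M + 1 := by
    rw [hlen]
    simp only
    rw [hj, hl, List.length_ofFn]
  set i : ℕ := ((M : ℤ) + k).toNat with hi
  have hiz : (i : ℤ) = (M : ℤ) + k := by
    rw [hi, Int.toNat_of_nonneg (by omega)]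
  have hilt : i < len j := by rw [hlenj]; omega
  have h5 := hspec j i hilt
  have hcast : ((o j + i : ℕ) : ℤ) = ((o j + M : ℕ) : ℤ) + k := by push_cast; omega
  rw [hcast] at h5
  rw [h5, hW, hj, hl]
  rw [List.getD_eq_getElem _ _ (by rw [List.length_ofFn]; omega), List.getElem_ofFn]
  show σ _ = σ k
  congr 1
  push_cast
  omega

end AttractorAux
open AttractorAux in
theorem stmt15 (F : NAField K) (a b : K) (ha0 : a ≠ 0) (ha : ‖a‖ < 1)
    (hb : ‖b‖ = (F.q : ℝ)) :
    (∀ p ∈ F.Attractor a b, ∀ ε : ℝ, 0 < ε →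
        ∃ r ∈ F.Attractor a b, (∃ n : ℕ, 1 ≤ n ∧ (F.Tmap a b)^[n] r = r) ∧
          max ‖r.1 - p.1‖ ‖r.2 - p.2‖ < ε) ∧
    (∃ p₀ ∈ F.Attractor a b, ∀ p ∈ F.Attractor a b, ∀ ε : ℝ, 0 < ε →
        ∃ n : ℕ, max ‖((F.Tmap a b)^[n] p₀).1 - p.1‖
          ‖((F.Tmap a b)^[n] p₀).2 - p.2‖ < ε) ∧
    ¬ (F.Attractor a b).Countable := by
  classical
  have hqi0' := hqi0 F
  have hqi1' := hqi1 F
  refine ⟨?_, ?_, ?_⟩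
  · -- density of periodic points
    intro p hp ε hε
    obtain ⟨u, hu, hu0, hu1⟩ := orbit_of_mem F a b ha0 ha hb hp
    obtain ⟨M, hM⟩ := exists_pow_lt_of_lt_one hε hqi1'
    set N : ℕ := 2 * (M + 1) + 1 with hN
    set s : ℤ → K := fun k =>
      repOf F (u ((k + ((M + 1 : ℕ) : ℤ)) % (N : ℤ) - ((M + 1 : ℕ) : ℤ))) with hsdef
    have hs : ∀ k : ℤ, s k =
        repOf F (u ((k + ((M + 1 : ℕ) : ℤ)) % (N : ℤ) - ((M + 1 : ℕ) : ℤ))) := fun _ => rfl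
    have hs1 : ∀ k, ‖s k‖ ≤ 1 := fun k => F.norm_reps _ (repOf_mem F (hu.1 _))
    have hsper : ∀ k : ℤ, s (k + (N : ℤ)) = s k := by
      intro k
      rw [hs, hs]
      congr 3
      have h1 : k + (N : ℤ) + ((M + 1 : ℕ) : ℤ) = k + ((M + 1 : ℕ) : ℤ) + (N : ℤ) * 1 := by ring
      rw [h1, Int.add_mul_emod_self_left]
    have hswin : ∀ k : ℤ, |k| ≤ (((M + 1 : ℕ)) : ℤ) → ‖u k - s k‖ ≤ (F.q : ℝ)⁻¹ := by
      intro k hk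
      rw [abs_le] at hk
      rw [hs]
      have hmod : (k + ((M + 1 : ℕ) : ℤ)) % (N : ℤ) = k + ((M + 1 : ℕ) : ℤ) :=
        Int.emod_eq_of_lt (by push_cast at hk ⊢; omega) (by push_cast at hk ⊢; omega)
      rw [hmod]
      have he : k + ((M + 1 : ℕ) : ℤ) - ((M + 1 : ℕ) : ℤ) = k := by ring
      rw [he]
      exact repOf_close F (hu.1 k)
    obtain ⟨w, hw, hwc⟩ := exists_orbit F a b ha hb s hs1
    have hper : (fun k => w (k + (N : ℤ))) = w := by
      apply orbit_eq F a b ha hb (orbit_shift F a b hw (N : ℤ)) hw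
      intro k
      have h1 : w (k + (N : ℤ)) - w k = (w (k + (N : ℤ)) - s (k + (N : ℤ))) + (s k - w k) := by
        rw [hsper k]; ring
      rw [h1]
      refine (na_add F _ _).trans (max_le (hwc _) ?_)
      rw [norm_sub_rev]
      exact hwc k
    refine ⟨(w 0, w (0 - 1)), orbit_mem F a b hw 0, ⟨N, by omega, ?_⟩, ?_⟩
    · rw [orbit_iterate F a b hw 0 N]
      have h1 : w (0 + (N : ℤ)) = w 0 := congrFun hper 0
      have h2 : w (0 + (N : ℤ) - 1) = w (0 - 1) := by
        have he : (0 : ℤ) + (N : ℤ) - 1 = (0 - 1) + (N : ℤ) := by ring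
        rw [he]
        exact congrFun hper (0 - 1)
      rw [h1, h2]
    · show max ‖w 0 - p.1‖ ‖w (0 - 1) - p.2‖ < ε
      rw [← hu0, ← hu1]
      have hwin : ∀ k : ℤ, |k| ≤ (((M + 1 : ℕ)) : ℤ) → ‖u k - w k‖ ≤ (F.q : ℝ)⁻¹ := by
        intro k hk
        have h1 : u k - w k = (u k - s k) + (s k - w k) := by ring
        rw [h1]
        refine (na_add F _ _).trans (max_le (hswin k hk) ?_)
        rw [norm_sub_rev]
        exact hwc k
      have h0 := expansive F a b ha hb hu hw (M + 1) hwin (M + 1) 0 (by simp)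
      have h1 := expansive F a b ha hb hu hw (M + 1) hwin M (0 - 1)
        (by rw [show (0 : ℤ) - 1 = -1 by ring, abs_neg, abs_one]; push_cast; omega)
      have hle0 : ‖u 0 - w 0‖ ≤ ((F.q : ℝ)⁻¹) ^ M :=
        h0.trans (pow_le_pow_of_le_one hqi0'.le hqi1'.le (by omega))
      have hle1 : ‖u (0 - 1) - w (0 - 1)‖ ≤ ((F.q : ℝ)⁻¹) ^ M :=
        h1.trans (pow_le_pow_of_le_one hqi0'.le hqi1'.le (by omega))
      apply max_lt
      · rw [norm_sub_rev]
        exact lt_of_le_of_lt hle0 hM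
      · rw [norm_sub_rev]
        exact lt_of_le_of_lt hle1 hM
  · -- dense orbit
    obtain ⟨sstar, hsmem, hsuniv⟩ := exists_universal F
    have hsnorm : ∀ m, ‖sstar m‖ ≤ 1 := fun m => F.norm_reps _ (hsmem m)
    obtain ⟨w, hw, hwc⟩ := exists_orbit F a b ha hb sstar hsnorm
    refine ⟨(w 0, w (0 - 1)), orbit_mem F a b hw 0, ?_⟩
    intro p hp ε hε
    obtain ⟨u, hu, hu0, hu1⟩ := orbit_of_mem F a b ha0 ha hb hp
    obtain ⟨M, hM⟩ := exists_pow_lt_of_lt_one hε hqi1'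
    obtain ⟨n, hn⟩ := hsuniv (M + 1) (fun k => repOf F (u k))
      (fun k _ => repOf_mem F (hu.1 k))
    refine ⟨n, ?_⟩
    rw [orbit_iterate F a b hw 0 n]
    set w' : ℤ → K := fun k => w (k + (n : ℤ)) with hw'def
    have hw'' : ∀ k : ℤ, w' k = w (k + (n : ℤ)) := fun _ => rfl
    have hw'orb : IsOrbit F a b w' := orbit_shift F a b hw (n : ℤ)
    have hwin : ∀ k : ℤ, |k| ≤ (((M + 1 : ℕ)) : ℤ) → ‖u k - w' k‖ ≤ (F.q : ℝ)⁻¹ := by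
      intro k hk
      have h1 := hn k hk
      have h2 : ‖w' k - repOf F (u k)‖ ≤ (F.q : ℝ)⁻¹ := by
        rw [← h1, hw'']
        have h3 := hwc (k + (n : ℤ))
        have he : (n : ℤ) + k = k + (n : ℤ) := by ring
        rw [he]
        exact h3
      have h4 : u k - w' k = (u k - repOf F (u k)) + (repOf F (u k) - w' k) := by ring
      rw [h4]
      refine (na_add F _ _).trans (max_le (repOf_close F (hu.1 k)) ?_)
      rw [norm_sub_rev]
      exact h2
    have h0 := expansive F a b ha hb hu hw'orb (M + 1) hwin (M + 1) 0 (by simp)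
    have h1 := expansive F a b ha hb hu hw'orb (M + 1) hwin M (0 - 1)
      (by rw [show (0 : ℤ) - 1 = -1 by ring, abs_neg, abs_one]; push_cast; omega)
    have hle0 : ‖u 0 - w' 0‖ ≤ ((F.q : ℝ)⁻¹) ^ M :=
      h0.trans (pow_le_pow_of_le_one hqi0'.le hqi1'.le (by omega))
    have hle1 : ‖u (0 - 1) - w' (0 - 1)‖ ≤ ((F.q : ℝ)⁻¹) ^ M :=
      h1.trans (pow_le_pow_of_le_one hqi0'.le hqi1'.le (by omega))
    show max ‖w (0 + (n : ℤ)) - p.1‖ ‖w (0 + (n : ℤ) - 1) - p.2‖ < ε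
    rw [← hu0, ← hu1]
    have he0 : w (0 + (n : ℤ)) = w' 0 := by rw [hw'']
    have he1 : w (0 + (n : ℤ) - 1) = w' (0 - 1) := by
      rw [hw'']
      congr 1
      ring
    rw [he0, he1]
    apply max_lt
    · rw [norm_sub_rev]
      exact lt_of_le_of_lt hle0 hM
    · rw [norm_sub_rev]
      exact lt_of_le_of_lt hle1 hM
  · -- uncountability
    intro hC
    haveI := hC.to_subtype
    have hcard2 : 1 < F.reps.card := by rw [F.card_reps]; exact F.one_lt_q
    obtain ⟨r0, hr0, r1, hr1, hner⟩ := Finset.one_lt_card.1 hcard2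
    set sfun : (ℕ → Bool) → ℤ → K := fun β k =>
      if 0 ≤ k ∧ β k.toNat = true then r1 else r0 with hsfdef
    have hsf : ∀ β k, sfun β k = if 0 ≤ k ∧ β k.toNat = true then r1 else r0 := fun _ _ => rfl
    have hsfmem : ∀ β k, sfun β k ∈ F.reps := by
      intro β k
      rw [hsf]
      split
      · exact hr1
      · exact hr0
    have hsfnorm : ∀ β k, ‖sfun β k‖ ≤ 1 := fun β k => F.norm_reps _ (hsfmem β k)
    have hex : ∀ β : ℕ → Bool, ∃ u : ℤ → K, IsOrbit F a b u ∧
        ∀ k, ‖u k - sfun β k‖ ≤ (F.q : ℝ)⁻¹ := fun β =>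
      exists_orbit F a b ha hb (sfun β) (hsfnorm β)
    choose uu huu hcl using hex
    set P : (ℕ → Bool) → ↥(F.Attractor a b) := fun β =>
      ⟨(uu β 0, uu β (0 - 1)), orbit_mem F a b (huu β) 0⟩ with hPdef
    have hPinj : Function.Injective P := by
      intro β β' hPe
      funext m
      by_contra hbm
      have hsne : sfun β (m : ℤ) ≠ sfun β' (m : ℤ) := by
        rw [hsf, hsf]
        have hnn : (0 : ℤ) ≤ (m : ℤ) := Int.natCast_nonneg m
        have htn : ((m : ℤ)).toNat = m := Int.toNat_natCast m
        rw [htn]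
        have hner' : r1 ≠ r0 := fun h => hner h.symm
        cases hb1 : β m <;> cases hb2 : β' m <;> simp_all [hnn]
      have hune : uu β (m : ℤ) ≠ uu β' (m : ℤ) := by
        intro heq
        have h1 := hcl β (m : ℤ)
        have h2 := hcl β' (m : ℤ)
        rw [heq] at h1
        have h3 : sfun β (m : ℤ) - sfun β' (m : ℤ)
            = (uu β' (m : ℤ) - sfun β' (m : ℤ)) - (uu β' (m : ℤ) - sfun β (m : ℤ)) := by ring
        have h4 : ‖sfun β (m : ℤ) - sfun β' (m : ℤ)‖ ≤ (F.q : ℝ)⁻¹ := by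
          rw [h3]
          exact (na_sub F _ _).trans (max_le h2 h1)
        exact absurd h4 (not_le.2 (F.reps_sep _ (hsfmem β _) _ (hsfmem β' _) hsne))
      apply hune
      have hit := orbit_iterate F a b (huu β) 0 m
      have hit' := orbit_iterate F a b (huu β') 0 m
      have hv : (P β : K × K) = (P β' : K × K) := by rw [hPe]
      have hv2 : (F.Tmap a b)^[m] (uu β 0, uu β (0 - 1))
          = (F.Tmap a b)^[m] (uu β' 0, uu β' (0 - 1)) := by
        exact congrArg _ hv
      rw [hit, hit'] at hv2
      have := congrArg Prod.fst hv2
      simpa using this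
    obtain ⟨g, hg⟩ := exists_injective_nat ↥(F.Attractor a b)
    have hsets : Function.Injective (fun S : Set ℕ => fun m => decide (m ∈ S)) := by
      intro S S' hSe
      ext m
      have := congrFun hSe m
      simpa [decide_eq_decide] using this
    exact Function.cantor_injective (fun S : Set ℕ => g (P (fun m => decide (m ∈ S))))
      (hg.comp (hPinj.comp hsets))
end
end

section
/- Let μ_T be the pushforward under the conjugacy ω : F^ℤ → A_T of the uniform Bernoulli measure on F^ℤ. Then there exists a constant C > 0 such that for every Borel set A ⊆ K², μ_T(A) ≤ C·diam(A)^α, where α = 1 + 1/(1 + log_q(1/|a|)) and diam is with respect to the max norm on K². -/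
open scoped Classical
open MeasureTheory Filter

noncomputable section

variable {K : Type*} [NormedField K]

namespace NAField
variable (F : NAField K)

lemma q_pos : 0 < (F.q : ℝ) := by exact_mod_cast Nat.lt_of_lt_of_le Nat.zero_lt_one F.one_lt_q.le

lemma q_inv_lt_one : (F.q : ℝ)⁻¹ < 1 := by
  rw [inv_lt_one_iff₀]; right; exact_mod_cast F.one_lt_q

lemma q_inv_pos : 0 < (F.q : ℝ)⁻¹ := by
  have := F.q_pos; positivity

/-- the ring of integers -/
def Rring : Subring K where
  carrier := {x | ‖x‖ ≤ 1}
  mul_mem' := fun {x y} hx hy => by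
    simpa using mul_le_one₀ hx (norm_nonneg _) hy
  one_mem' := by simp
  add_mem' := fun {x y} hx hy => le_trans (F.na x y) (max_le hx hy)
  zero_mem' := by simp
  neg_mem' := fun {x} hx => by simpa using hx

def mIdeal : Ideal (F.Rring) where
  carrier := {x | ‖(x : K)‖ ≤ (F.q : ℝ)⁻¹}
  add_mem' := fun {x y} hx hy => le_trans (F.na x y) (max_le hx hy)
  zero_mem' := by simpa using F.q_inv_pos.le
  smul_mem' := fun c x hx => by
    have hc : ‖(c : K)‖ ≤ 1 := c.2
    have : ‖(c : K) * (x : K)‖ = ‖(c:K)‖ * ‖(x:K)‖ := norm_mul _ _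
    calc ‖((c • x : F.Rring) : K)‖ = ‖(c:K)‖ * ‖(x:K)‖ := norm_mul _ _
      _ ≤ 1 * (F.q : ℝ)⁻¹ := by
          apply mul_le_mul hc hx (norm_nonneg _) zero_le_one
      _ = (F.q : ℝ)⁻¹ := one_mul _

/-- norms ≤ 1 that are > 1/q are = 1 -/
lemma norm_eq_one_of {x : K} (hx : ‖x‖ ≤ 1) (hx' : (F.q : ℝ)⁻¹ < ‖x‖) : ‖x‖ = 1 := by
  have hx0 : x ≠ 0 := by
    intro h; rw [h, norm_zero] at hx'; exact absurd hx' (not_lt.2 F.q_inv_pos.le)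
  obtain ⟨n, hn⟩ := F.valGroup x hx0
  rcases lt_trichotomy n 0 with h | h | h
  · exfalso
    have : (F.q : ℝ) ^ n ≤ (F.q : ℝ) ^ (-1 : ℤ) := by
      apply zpow_le_zpow_right₀ (by exact_mod_cast F.one_lt_q.le) (by omega)
    rw [hn] at hx'
    simp only [zpow_neg, zpow_one] at this
    linarith
  · rw [hn, h, zpow_zero]
  · exfalso
    have : (F.q : ℝ) ^ (1 : ℤ) ≤ (F.q : ℝ) ^ n := by
      apply zpow_le_zpow_right₀ (by exact_mod_cast F.one_lt_q.le) (by omega)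
    rw [hn] at hx
    simp only [zpow_one] at this
    have : (1:ℝ) < (F.q:ℝ) := by exact_mod_cast F.one_lt_q
    linarith

instance mIdeal_prime : (F.mIdeal).IsPrime := by
  constructor
  · intro h
    have h1 : ((1 : F.Rring) : K) = 1 := rfl
    have := (Ideal.eq_top_iff_one _).mp h
    have : ‖((1 : F.Rring) : K)‖ ≤ (F.q:ℝ)⁻¹ := this
    rw [h1, norm_one] at this
    exact absurd this (not_le.2 F.q_inv_lt_one)
  · intro x y hxy
    by_contra h
    push_neg at h
    obtain ⟨hx, hy⟩ := h
    have hx1 : ‖(x:K)‖ = 1 := F.norm_eq_one_of x.2 (not_le.1 hx)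
    have hy1 : ‖(y:K)‖ = 1 := F.norm_eq_one_of y.2 (not_le.1 hy)
    have : ‖((x*y : F.Rring) : K)‖ ≤ (F.q:ℝ)⁻¹ := hxy
    rw [show ((x*y : F.Rring) : K) = (x:K)*(y:K) from rfl, norm_mul, hx1, hy1, one_mul] at this
    exact absurd this (not_le.2 F.q_inv_lt_one)

/-- the residue field -/
abbrev Residue := F.Rring ⧸ F.mIdeal

lemma residue_eq_iff (x y : F.Rring) :
    Ideal.Quotient.mk F.mIdeal x = Ideal.Quotient.mk F.mIdeal y ↔ ‖(x:K) - (y:K)‖ ≤ (F.q:ℝ)⁻¹ := by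
  rw [Ideal.Quotient.eq]
  rfl

def repMap (s : {s // s ∈ F.reps}) : F.Residue :=
  Ideal.Quotient.mk F.mIdeal ⟨s.1, F.norm_reps s.1 s.2⟩

lemma repMap_bij : Function.Bijective F.repMap := by
  constructor
  · rintro ⟨s, hs⟩ ⟨t, ht⟩ h
    rw [repMap, repMap, residue_eq_iff] at h
    by_contra hne
    have : s ≠ t := by simpa using hne
    exact absurd h (not_le.2 (F.reps_sep s hs t ht this))
  · intro z
    obtain ⟨x, rfl⟩ := Ideal.Quotient.mk_surjective (I := F.mIdeal) z
    obtain ⟨s, hs, hxs⟩ := F.reps_cover (x:K) x.2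
    exact ⟨⟨s, hs⟩, by rw [repMap, residue_eq_iff]; simpa [norm_sub_rev] using hxs⟩

lemma fermat (x : K) (hx : ‖x‖ ≤ 1) : ‖x ^ F.q - x‖ ≤ (F.q : ℝ)⁻¹ := by
  classical
  haveI : Finite F.Residue := Finite.of_surjective _ F.repMap_bij.2
  haveI : Fintype F.Residue := Fintype.ofFinite _
  have hcard : Fintype.card F.Residue = F.q := by
    rw [← Fintype.card_of_bijective F.repMap_bij]
    simp [Fintype.card_coe, F.card_reps]
  letI : Field F.Residue := Fintype.fieldOfDomain _
  have hp := FiniteField.pow_card (Ideal.Quotient.mk F.mIdeal ⟨x, hx⟩)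
  rw [hcard, ← map_pow] at hp
  rw [residue_eq_iff] at hp
  exact hp

end NAField

lemma pow_sub_pow_norm_le {K : Type*} [NormedField K] (na : IsNonarchimedean (fun x : K => ‖x‖))
    (n : ℕ) (s t : K) (hs : ‖s‖ ≤ 1) (ht : ‖t‖ ≤ 1) : ‖s ^ n - t ^ n‖ ≤ ‖s - t‖ := by
  have na' : ∀ x y : K, ‖x + y‖ ≤ max ‖x‖ ‖y‖ := na
  induction n with
  | zero => simp
  | succ n ih =>
    have key : s ^ (n+1) - t ^ (n+1) = s ^ n * (s - t) + (s ^ n - t ^ n) * t := by ring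
    rw [key]
    refine le_trans (na' _ _) (max_le ?_ ?_)
    · rw [norm_mul]
      calc ‖s^n‖ * ‖s - t‖ ≤ 1 * ‖s - t‖ := by
            apply mul_le_mul_of_nonneg_right _ (norm_nonneg _)
            simpa using pow_le_one₀ (norm_nonneg s) hs
        _ = ‖s - t‖ := one_mul _
    · rw [norm_mul]
      calc ‖s^n - t^n‖ * ‖t‖ ≤ ‖s - t‖ * 1 := mul_le_mul ih ht (norm_nonneg _) (norm_nonneg _)
        _ = ‖s - t‖ := mul_one _


namespace NAField
variable {K : Type*} [NormedField K] (F : NAField K) (a b : K)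

lemma Tinv_Tmap (ha0 : a ≠ 0) (p : K × K) : F.Tinv a b (F.Tmap a b p) = p := by
  unfold Tinv Tmap
  ext
  · rfl
  · simp only
    field_simp
    ring

lemma Tmap_Tinv (ha0 : a ≠ 0) (p : K × K) : F.Tmap a b (F.Tinv a b p) = p := by
  unfold Tinv Tmap
  ext
  · simp only
    field_simp
    ring
  · rfl

lemma Tmap_mem_unitPoly (ha : ‖a‖ < 1) (hb : ‖b‖ = (F.q : ℝ)) {p : K × K}
    (hp : p ∈ unitPoly K) : F.Tmap a b p ∈ unitPoly K := by
  have na' : ∀ x y : K, ‖x + y‖ ≤ max ‖x‖ ‖y‖ := F.na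
  refine ⟨?_, hp.1⟩
  refine le_trans (na' _ _) (max_le ?_ ?_)
  · rw [norm_mul]
    calc ‖a‖ * ‖p.2‖ ≤ 1 * 1 := mul_le_mul ha.le hp.2 (norm_nonneg _) zero_le_one
      _ = 1 := one_mul _
  · rw [norm_mul, hb]
    calc (F.q : ℝ) * ‖p.1 ^ F.q - p.1‖ ≤ (F.q : ℝ) * (F.q : ℝ)⁻¹ :=
          mul_le_mul_of_nonneg_left (F.fermat p.1 hp.1) F.q_pos.le
      _ = 1 := mul_inv_cancel₀ F.q_pos.ne'

lemma iter_Tmap_mem (ha : ‖a‖ < 1) (hb : ‖b‖ = (F.q : ℝ)) (n : ℕ) {p : K × K}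
    (hp : p ∈ unitPoly K) : (F.Tmap a b)^[n] p ∈ unitPoly K := by
  induction n with
  | zero => exact hp
  | succ n ih => rw [Function.iterate_succ_apply']; exact F.Tmap_mem_unitPoly a b ha hb ih

lemma attractor_iterZ_mem (ha0 : a ≠ 0) (ha : ‖a‖ < 1) (hb : ‖b‖ = (F.q : ℝ))
    {p : K × K} (hp : p ∈ F.Attractor a b) (k : ℤ) : F.iterZ a b k p ∈ unitPoly K := by
  have hmem : ∀ n : ℕ, 1 ≤ n → p ∈ (F.Tmap a b)^[n] '' unitPoly K := by
    intro n hn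
    have := Set.mem_iInter₂.mp hp n hn
    exact this
  set n : ℕ := (-k).toNat + 1 with hn
  obtain ⟨z, hz, hzp⟩ := hmem n (Nat.le_add_left 1 _)
  have hTinvT : Function.LeftInverse (F.Tinv a b) (F.Tmap a b) := fun w => F.Tinv_Tmap a b ha0 w
  unfold iterZ
  split_ifs with h
  · rw [← hzp, ← Function.iterate_add_apply]
    exact F.iter_Tmap_mem a b ha hb _ hz
  · -- k < 0, m := (-k).toNat ≤ n - 1
    set m : ℕ := (-k).toNat with hm
    have hmn : m + 1 = n := rfl
    have hsplit : (F.Tmap a b)^[n] z = (F.Tmap a b)^[m] ((F.Tmap a b)^[n - m] z) := by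
      rw [← Function.iterate_add_apply]
      congr 1
      omega
    have : (F.Tinv a b)^[m] p = (F.Tmap a b)^[n - m] z := by
      rw [← hzp, hsplit, hTinvT.iterate m]
    rw [this]
    exact F.iter_Tmap_mem a b ha hb _ hz

lemma iterZ_succ (ha0 : a ≠ 0) (k : ℤ) (p : K × K) :
    F.iterZ a b (k + 1) p = F.Tmap a b (F.iterZ a b k p) := by
  unfold iterZ
  rcases le_or_gt 0 k with h | h
  · rw [if_pos h, if_pos (by omega)]
    have : (k + 1).toNat = k.toNat + 1 := by omega
    rw [this, Function.iterate_succ_apply']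
  · have hnot : ¬ 0 ≤ k := by omega
    rw [if_neg hnot]
    by_cases h1 : k + 1 = 0
    · have hk1 : k = -1 := by omega
      subst hk1
      norm_num [F.Tmap_Tinv a b ha0]
    · have h2 : ¬ 0 ≤ k + 1 := by omega
      rw [if_neg h2]
      have hk : (-k).toNat = (-(k+1)).toNat + 1 := by omega
      rw [hk, Function.iterate_succ_apply', F.Tmap_Tinv a b ha0]

lemma iterZ_fst (ha0 : a ≠ 0) (k : ℤ) (p : K × K) :
    F.iterZ a b k p = ((F.iterZ a b k p).1, (F.iterZ a b (k-1) p).1) := by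
  have h := F.iterZ_succ a b ha0 (k-1) p
  rw [sub_add_cancel] at h
  rw [h]
  rfl

lemma iterZ_rec (ha0 : a ≠ 0) (k : ℤ) (p : K × K) :
    (F.iterZ a b (k+1) p).1 =
      a * (F.iterZ a b (k-1) p).1 + b * ((F.iterZ a b k p).1 ^ F.q - (F.iterZ a b k p).1) := by
  rw [F.iterZ_succ a b ha0 k p, F.iterZ_fst a b ha0 k p]
  rfl

lemma iterZ_zero (p : K × K) : F.iterZ a b 0 p = p := by
  unfold iterZ; simp

lemma step_fwd (ha : ‖a‖ < 1) (hb : ‖b‖ = (F.q : ℝ)) (ha0 : a ≠ 0)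
    {p p' : K × K} (hp : p ∈ F.Attractor a b) (hp' : p' ∈ F.Attractor a b) (k : ℤ) :
    ‖(F.iterZ a b (k+1) p).1 - (F.iterZ a b (k+1) p').1‖ ≤
      (F.q : ℝ) * max ‖(F.iterZ a b (k-1) p).1 - (F.iterZ a b (k-1) p').1‖
                      ‖(F.iterZ a b k p).1 - (F.iterZ a b k p').1‖ := by
  have na' : ∀ x y : K, ‖x + y‖ ≤ max ‖x‖ ‖y‖ := F.na
  set X := (F.iterZ a b k p).1
  set X' := (F.iterZ a b k p').1
  set Y := (F.iterZ a b (k-1) p).1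
  set Y' := (F.iterZ a b (k-1) p').1
  have hX : ‖X‖ ≤ 1 := (F.attractor_iterZ_mem a b ha0 ha hb hp k).1
  have hX' : ‖X'‖ ≤ 1 := (F.attractor_iterZ_mem a b ha0 ha hb hp' k).1
  have hrec : (F.iterZ a b (k+1) p).1 - (F.iterZ a b (k+1) p').1 =
      a * (Y - Y') + b * ((X ^ F.q - X' ^ F.q) - (X - X')) := by
    rw [F.iterZ_rec a b ha0 k p, F.iterZ_rec a b ha0 k p']
    ring
  rw [hrec]
  have h1 : ‖a * (Y - Y')‖ ≤ ‖Y - Y'‖ := by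
    rw [norm_mul]
    calc ‖a‖ * ‖Y - Y'‖ ≤ 1 * ‖Y - Y'‖ :=
          mul_le_mul_of_nonneg_right ha.le (norm_nonneg _)
      _ = _ := one_mul _
  have h2 : ‖b * ((X ^ F.q - X' ^ F.q) - (X - X'))‖ ≤ (F.q : ℝ) * ‖X - X'‖ := by
    rw [norm_mul, hb]
    apply mul_le_mul_of_nonneg_left _ F.q_pos.le
    have := na' (X ^ F.q - X' ^ F.q) (-(X - X'))
    rw [← sub_eq_add_neg, norm_neg] at this
    refine le_trans this (max_le ?_ le_rfl)
    exact pow_sub_pow_norm_le F.na F.q X X' hX hX'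
  have hq1 : (1:ℝ) ≤ (F.q:ℝ) := by exact_mod_cast F.one_lt_q.le
  refine le_trans (na' _ _) (max_le ?_ ?_)
  · calc ‖a * (Y - Y')‖ ≤ ‖Y - Y'‖ := h1
      _ ≤ max ‖Y - Y'‖ ‖X - X'‖ := le_max_left _ _
      _ ≤ (F.q:ℝ) * max ‖Y - Y'‖ ‖X - X'‖ := by
          nlinarith [le_max_left ‖Y - Y'‖ ‖X - X'‖, norm_nonneg (Y - Y'), norm_nonneg (X - X'),
            le_max_right ‖Y - Y'‖ ‖X - X'‖]
  · calc ‖b * ((X ^ F.q - X' ^ F.q) - (X - X'))‖ ≤ (F.q : ℝ) * ‖X - X'‖ := h2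
      _ ≤ (F.q:ℝ) * max ‖Y - Y'‖ ‖X - X'‖ :=
          mul_le_mul_of_nonneg_left (le_max_right _ _) F.q_pos.le

lemma step_bwd (ha : ‖a‖ < 1) (hb : ‖b‖ = (F.q : ℝ)) (ha0 : a ≠ 0)
    {v : ℕ} (hv : ‖a‖ = ((F.q : ℝ) ^ (v:ℕ))⁻¹)
    {p p' : K × K} (hp : p ∈ F.Attractor a b) (hp' : p' ∈ F.Attractor a b) (k : ℤ) :
    ‖(F.iterZ a b (k-1) p).1 - (F.iterZ a b (k-1) p').1‖ ≤
      (F.q : ℝ)^(v+1) * max ‖(F.iterZ a b k p).1 - (F.iterZ a b k p').1‖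
                      ‖(F.iterZ a b (k+1) p).1 - (F.iterZ a b (k+1) p').1‖ := by
  have na' : ∀ x y : K, ‖x + y‖ ≤ max ‖x‖ ‖y‖ := F.na
  set X := (F.iterZ a b k p).1
  set X' := (F.iterZ a b k p').1
  set Z := (F.iterZ a b (k+1) p).1
  set Z' := (F.iterZ a b (k+1) p').1
  have hX : ‖X‖ ≤ 1 := (F.attractor_iterZ_mem a b ha0 ha hb hp k).1
  have hX' : ‖X'‖ ≤ 1 := (F.attractor_iterZ_mem a b ha0 ha hb hp' k).1
  have hrec : (F.iterZ a b (k-1) p).1 - (F.iterZ a b (k-1) p').1 =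
      a⁻¹ * ((Z - Z') + (- b) * ((X ^ F.q - X' ^ F.q) - (X - X'))) := by
    have e1 : Z = a * (F.iterZ a b (k-1) p).1 + b * (X ^ F.q - X) := F.iterZ_rec a b ha0 k p
    have e2 : Z' = a * (F.iterZ a b (k-1) p').1 + b * (X' ^ F.q - X') := F.iterZ_rec a b ha0 k p'
    field_simp
    rw [e1, e2]
    ring
  rw [hrec, norm_mul]
  have hainv : ‖a⁻¹‖ = (F.q : ℝ)^(v:ℕ) := by
    rw [norm_inv, hv, inv_inv]
  rw [hainv]
  have hq1 : (1:ℝ) ≤ (F.q:ℝ) := by exact_mod_cast F.one_lt_q.le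
  have hbnd : ‖(Z - Z') + (- b) * ((X ^ F.q - X' ^ F.q) - (X - X'))‖ ≤
      (F.q:ℝ) * max ‖X - X'‖ ‖Z - Z'‖ := by
    refine le_trans (na' _ _) (max_le ?_ ?_)
    · calc ‖Z - Z'‖ ≤ max ‖X - X'‖ ‖Z - Z'‖ := le_max_right _ _
        _ ≤ (F.q:ℝ) * max ‖X - X'‖ ‖Z - Z'‖ := by
            nlinarith [norm_nonneg (X - X'), norm_nonneg (Z - Z'),
              le_max_left ‖X - X'‖ ‖Z - Z'‖, le_max_right ‖X - X'‖ ‖Z - Z'‖]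
    · rw [norm_mul, norm_neg, hb]
      apply le_trans (mul_le_mul_of_nonneg_left _ F.q_pos.le)
        (mul_le_mul_of_nonneg_left (le_max_left _ _) F.q_pos.le)
      have := na' (X ^ F.q - X' ^ F.q) (-(X - X'))
      rw [← sub_eq_add_neg, norm_neg] at this
      exact le_trans this (max_le (pow_sub_pow_norm_le F.na F.q X X' hX hX') le_rfl)
  calc (F.q:ℝ)^(v:ℕ) * ‖(Z - Z') + (- b) * ((X ^ F.q - X' ^ F.q) - (X - X'))‖
      ≤ (F.q:ℝ)^(v:ℕ) * ((F.q:ℝ) * max ‖X - X'‖ ‖Z - Z'‖) :=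
        mul_le_mul_of_nonneg_left hbnd (by positivity)
    _ = (F.q : ℝ)^(v+1) * max ‖X - X'‖ ‖Z - Z'‖ := by ring

/-- distance between points, sup of coordinates -/
def Dd (p p' : K × K) : ℝ := max ‖p.1 - p'.1‖ ‖p.2 - p'.2‖

lemma Dd_nonneg (p p' : K × K) : 0 ≤ Dd p p' := le_trans (norm_nonneg _) (le_max_left _ _)

lemma iterZ_neg_one_fst (ha0 : a ≠ 0) (p : K × K) : (F.iterZ a b (-1) p).1 = p.2 := by
  have := F.iterZ_fst a b ha0 0 p
  rw [F.iterZ_zero a b] at this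
  have h2 := congrArg Prod.snd this
  simp only at h2
  rw [show (0:ℤ) - 1 = -1 from rfl] at h2
  exact h2.symm

lemma growth_fwd (ha : ‖a‖ < 1) (hb : ‖b‖ = (F.q : ℝ)) (ha0 : a ≠ 0)
    {p p' : K × K} (hp : p ∈ F.Attractor a b) (hp' : p' ∈ F.Attractor a b) (n : ℕ) :
    ‖(F.iterZ a b n p).1 - (F.iterZ a b n p').1‖ ≤ (F.q:ℝ)^n * Dd p p' ∧
    ‖(F.iterZ a b ((n:ℤ)-1) p).1 - (F.iterZ a b ((n:ℤ)-1) p').1‖ ≤ (F.q:ℝ)^n * Dd p p' := by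
  have hq1 : (1:ℝ) ≤ (F.q:ℝ) := by exact_mod_cast F.one_lt_q.le
  have hD := Dd_nonneg p p'
  induction n with
  | zero =>
    constructor
    · rw [show ((0:ℕ):ℤ) = 0 from rfl, F.iterZ_zero a b, F.iterZ_zero a b]
      simpa [Dd] using le_max_left _ _
    · rw [show ((0:ℕ):ℤ) - 1 = -1 by ring, F.iterZ_neg_one_fst a b ha0, F.iterZ_neg_one_fst a b ha0]
      simpa [Dd] using le_max_right _ _
  | succ n ih =>
    have hmono : (F.q:ℝ)^n * Dd p p' ≤ (F.q:ℝ)^(n+1) * Dd p p' := by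
      apply mul_le_mul_of_nonneg_right _ hD
      exact pow_le_pow_right₀ hq1 (Nat.le_succ n)
    constructor
    · have := F.step_fwd a b ha hb ha0 hp hp' n
      rw [show ((n:ℤ)+1) = ((n+1:ℕ):ℤ) by push_cast; ring] at this
      refine le_trans this ?_
      rw [pow_succ, mul_comm ((F.q:ℝ)^n) (F.q:ℝ), mul_assoc]
      exact mul_le_mul_of_nonneg_left (max_le ih.2 ih.1) F.q_pos.le
    · rw [show ((n+1:ℕ):ℤ)-1 = (n:ℤ) by push_cast; ring]
      exact le_trans ih.1 hmono

lemma growth_bwd (ha : ‖a‖ < 1) (hb : ‖b‖ = (F.q : ℝ)) (ha0 : a ≠ 0)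
    {v : ℕ} (hv : ‖a‖ = ((F.q : ℝ) ^ (v:ℕ))⁻¹)
    {p p' : K × K} (hp : p ∈ F.Attractor a b) (hp' : p' ∈ F.Attractor a b) (n : ℕ) :
    ‖(F.iterZ a b (-(n:ℤ)) p).1 - (F.iterZ a b (-(n:ℤ)) p').1‖ ≤ ((F.q:ℝ)^(v+1))^n * Dd p p' ∧
    ‖(F.iterZ a b (-(n:ℤ)-1) p).1 - (F.iterZ a b (-(n:ℤ)-1) p').1‖ ≤
      ((F.q:ℝ)^(v+1))^(n+1) * Dd p p' := by
  have hq1 : (1:ℝ) ≤ (F.q:ℝ) := by exact_mod_cast F.one_lt_q.le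
  have hc1 : (1:ℝ) ≤ (F.q:ℝ)^(v+1) := one_le_pow₀ hq1
  have hD := Dd_nonneg p p'
  induction n with
  | zero =>
    constructor
    · rw [show (-((0:ℕ):ℤ)) = 0 by ring, F.iterZ_zero a b, F.iterZ_zero a b]
      calc ‖p.1 - p'.1‖ ≤ Dd p p' := le_max_left _ _
        _ ≤ _ := by rw [pow_zero, one_mul]
    · rw [show (-((0:ℕ):ℤ)-1) = -1 by ring, F.iterZ_neg_one_fst a b ha0,
        F.iterZ_neg_one_fst a b ha0]
      calc ‖p.2 - p'.2‖ ≤ Dd p p' := le_max_right _ _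
        _ ≤ _ := by
          rw [pow_one]
          nlinarith
  | succ n ih =>
    constructor
    · rw [show (-((n+1:ℕ):ℤ)) = -(n:ℤ)-1 by push_cast; ring]
      exact ih.2
    · have := F.step_bwd a b ha hb ha0 hv hp hp' (-(n:ℤ)-1)
      rw [show (-(n:ℤ)-1-1) = -((n+1:ℕ):ℤ)-1 by push_cast; ring,
        show (-(n:ℤ)-1+1) = -(n:ℤ) by ring] at this
      refine le_trans this ?_
      rw [pow_succ ((F.q:ℝ)^(v+1)) (n+1)]
      rw [mul_comm (((F.q:ℝ)^(v+1))^(n+1)) ((F.q:ℝ)^(v+1)), mul_assoc]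
      apply mul_le_mul_of_nonneg_left _ (by positivity)
      apply max_le ih.2
      calc ‖(F.iterZ a b (-(n:ℤ)) p).1 - (F.iterZ a b (-(n:ℤ)) p').1‖
          ≤ ((F.q:ℝ)^(v+1))^n * Dd p p' := ih.1
        _ ≤ ((F.q:ℝ)^(v+1))^(n+1) * Dd p p' := by
            apply mul_le_mul_of_nonneg_right _ hD
            exact pow_le_pow_right₀ hc1 (Nat.le_succ n)

lemma exists_v (ha0 : a ≠ 0) (ha : ‖a‖ < 1) :
    ∃ v : ℕ, 1 ≤ v ∧ ‖a‖ = ((F.q : ℝ) ^ (v:ℕ))⁻¹ := by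
  obtain ⟨n, hn⟩ := F.valGroup a ha0
  have hq1 : (1:ℝ) < (F.q:ℝ) := by exact_mod_cast F.one_lt_q
  have hneg : n < 0 := by
    by_contra h
    push_neg at h
    have : (1:ℝ) ≤ (F.q:ℝ) ^ n := one_le_zpow₀ hq1.le h
    rw [hn] at ha
    linarith
  refine ⟨(-n).toNat, by omega, ?_⟩
  have : ((F.q:ℝ))^n = ((F.q:ℝ)^(((-n).toNat : ℕ)))⁻¹ := by
    rw [← zpow_natCast, ← zpow_neg]
    congr 1
    omega
  rw [hn, this]

lemma exists_symbol (ha0 : a ≠ 0) (ha : ‖a‖ < 1) (hb : ‖b‖ = (F.q : ℝ))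
    {p : K × K} (hp : p ∈ F.Attractor a b) :
    ∃ s : ℤ → K, (∀ k, s k ∈ F.reps) ∧
      ∀ k, ‖(F.iterZ a b k p).1 - s k‖ ≤ (F.q : ℝ)⁻¹ := by
  have h : ∀ k : ℤ, ∃ t ∈ F.reps, ‖(F.iterZ a b k p).1 - t‖ ≤ (F.q : ℝ)⁻¹ :=
    fun k => F.reps_cover _ (F.attractor_iterZ_mem a b ha0 ha hb hp k).1
  choose s hs1 hs2 using h
  exact ⟨s, hs1, hs2⟩

lemma continuous_Tmap : Continuous (F.Tmap a b) := by
  unfold Tmap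
  fun_prop

lemma continuous_Tinv : Continuous (F.Tinv a b) := by
  unfold Tinv
  fun_prop

lemma continuous_iterZ (k : ℤ) : Continuous (F.iterZ a b k) := by
  unfold iterZ
  split_ifs
  · exact (F.continuous_Tmap a b).iterate _
  · exact (F.continuous_Tinv a b).iterate _

include F in
lemma properK : ProperSpace K := by
  haveI := F.complete
  haveI := F.locCompact
  obtain ⟨ϖ, hϖ⟩ := F.exists_unif
  have hϖ0 : ϖ ≠ 0 := by
    intro h
    rw [h, norm_zero] at hϖ
    exact absurd hϖ.symm (ne_of_gt F.q_inv_pos)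
  letI : NontriviallyNormedField K :=
    { ‹NormedField K› with
      non_trivial := by
        refine ⟨ϖ⁻¹, ?_⟩
        rw [norm_inv, hϖ, inv_inv]
        exact_mod_cast F.one_lt_q }
  exact ProperSpace.of_nontriviallyNormedField_of_weaklyLocallyCompactSpace K

include F in
lemma unitPoly_compact : IsCompact (unitPoly K) := by
  haveI := F.properK
  have : unitPoly K = (Metric.closedBall (0:K) 1) ×ˢ (Metric.closedBall (0:K) 1) := by
    ext p
    simp [unitPoly, Set.mem_prod, Metric.mem_closedBall, dist_zero_right]
  rw [this]
  exact (isCompact_closedBall _ _).prod (isCompact_closedBall _ _)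

lemma attractor_closed : IsClosed (F.Attractor a b) := by
  unfold Attractor
  refine isClosed_biInter (fun n _ => ?_)
  exact ((F.unitPoly_compact.image ((F.continuous_Tmap a b).iterate n))).isClosed

lemma cyl_closed (s : ℤ → K) (M : ℕ) : IsClosed (F.Cyl a b s M) := by
  have : F.Cyl a b s M = F.Attractor a b ∩
      ⋂ k ∈ {k : ℤ | |k| ≤ (M:ℤ)}, {p : K × K | ‖(F.iterZ a b k p).1 - s k‖ ≤ (F.q:ℝ)⁻¹} := by
    ext p
    simp [Cyl, Set.mem_iInter]
  rw [this]
  refine (F.attractor_closed a b).inter (isClosed_biInter (fun k _ => ?_))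
  have hc : Continuous (fun p : K × K => ‖(F.iterZ a b k p).1 - s k‖) :=
    (((F.continuous_iterZ a b k).fst).sub continuous_const).norm
  exact isClosed_le hc continuous_const

include F in
lemma secondCountable : SecondCountableTopology K := by
  haveI := F.properK
  infer_instance

section Meas
variable [MeasurableSpace K] [BorelSpace K]

lemma cyl_measurable (s : ℤ → K) (M : ℕ) : MeasurableSet (F.Cyl a b s M) := by
  haveI := F.secondCountable
  exact (F.cyl_closed a b s M).measurableSet

lemma cyl_disjoint (s t : ℤ → K) (M : ℕ) (k0 : ℤ) (hk0 : |k0| ≤ (M:ℤ))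
    (hs : s k0 ∈ F.reps) (ht : t k0 ∈ F.reps) (hne : s k0 ≠ t k0) :
    Disjoint (F.Cyl a b s M) (F.Cyl a b t M) := by
  rw [Set.disjoint_left]
  rintro p ⟨hpA, hps⟩ ⟨_, hpt⟩
  have h1 := hps k0 hk0
  have h2 := hpt k0 hk0
  have na' : ∀ x y : K, ‖x + y‖ ≤ max ‖x‖ ‖y‖ := F.na
  have : ‖s k0 - t k0‖ ≤ (F.q:ℝ)⁻¹ := by
    have := na' (-(((F.iterZ a b k0 p).1) - s k0)) (((F.iterZ a b k0 p).1) - t k0)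
    rw [norm_neg] at this
    calc ‖s k0 - t k0‖ = ‖-((F.iterZ a b k0 p).1 - s k0) + ((F.iterZ a b k0 p).1 - t k0)‖ := by
          ring_nf
      _ ≤ max ‖(F.iterZ a b k0 p).1 - s k0‖ ‖(F.iterZ a b k0 p).1 - t k0‖ := this
      _ ≤ (F.q:ℝ)⁻¹ := max_le h1 h2
  exact absurd this (not_le.2 (F.reps_sep _ hs _ ht hne))

lemma attractor_compl_null (μ : Measure (K × K)) (hprob : μ Set.univ = 1)
    (hcyl : ∀ s : ℤ → K, (∀ k, s k ∈ F.reps) → ∀ M : ℕ,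
      μ (F.Cyl a b s M) = ((F.q : ENNReal))⁻¹ ^ (2 * M + 1)) :
    μ ((F.Attractor a b)ᶜ) = 0 := by
  classical
  set fam : {x // x ∈ F.reps} → Set (K × K) := fun t => F.Cyl a b (fun _ => t.1) 0 with hfam
  have hmeas : ∀ t, MeasurableSet (fam t) := fun t => F.cyl_measurable a b _ 0
  have hdisj : Pairwise (Function.onFun Disjoint fam) := by
    intro t t' hne
    refine F.cyl_disjoint a b _ _ 0 0 (by norm_num) t.2 t'.2 ?_
    exact fun h => hne (Subtype.ext h)
  have hval : ∀ t, μ (fam t) = ((F.q : ENNReal))⁻¹ := by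
    intro t
    rw [hfam]
    simp only
    rw [hcyl (fun _ => t.1) (fun _ => t.2) 0]
    norm_num
  have hq0 : F.q ≠ 0 := by
    have := F.one_lt_q
    omega
  have hU : μ (⋃ t, fam t) = 1 := by
    rw [measure_iUnion hdisj hmeas]
    rw [tsum_congr hval, tsum_fintype, Finset.sum_const, Finset.card_univ]
    have hcard : Fintype.card {x // x ∈ F.reps} = F.q := by
      simp [Fintype.card_coe, F.card_reps]
    rw [hcard, nsmul_eq_mul]
    exact ENNReal.mul_inv_cancel (by exact_mod_cast hq0) (by simp)
  clear hq0
  have hsub : (F.Attractor a b)ᶜ ⊆ (⋃ t, fam t)ᶜ := by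
    apply Set.compl_subset_compl.2
    refine Set.iUnion_subset (fun t => ?_)
    exact fun p hp => hp.1
  refine le_antisymm ?_ (zero_le)
  calc μ ((F.Attractor a b)ᶜ) ≤ μ ((⋃ t, fam t)ᶜ) := measure_mono hsub
    _ = μ Set.univ - μ (⋃ t, fam t) := measure_compl (MeasurableSet.iUnion hmeas) (by
        rw [hU]; exact ENNReal.one_ne_top)
    _ = 0 := by rw [hU, hprob, tsub_self]

lemma cover_bound (ha0 : a ≠ 0) (ha : ‖a‖ < 1) (hb : ‖b‖ = (F.q : ℝ))
    (μ : Measure (K × K))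
    (hcyl : ∀ s : ℤ → K, (∀ k, s k ∈ F.reps) → ∀ M : ℕ,
      μ (F.Cyl a b s M) = ((F.q : ENNReal))⁻¹ ^ (2 * M + 1))
    (Mf Mb : ℕ) (hMb : Mb ≤ Mf) (σ : ℤ → K) (hσ : ∀ k, σ k ∈ F.reps)
    (A : Set (K × K))
    (hA : ∀ p ∈ A ∩ F.Attractor a b, ∀ k : ℤ, -(Mb:ℤ) ≤ k → k ≤ (Mf:ℤ) →
      ‖(F.iterZ a b k p).1 - σ k‖ ≤ (F.q:ℝ)⁻¹) :
    μ (A ∩ F.Attractor a b) ≤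
      (F.q : ENNReal) ^ (Mf - Mb) * ((F.q : ENNReal))⁻¹ ^ (2 * Mf + 1) := by
  classical
  set J : Finset ℤ := Finset.Icc (-(Mf:ℤ)) (-(Mb:ℤ)-1) with hJ
  set sfun : (J → {x // x ∈ F.reps}) → ℤ → K :=
    fun f k => if h : k ∈ J then (f ⟨k, h⟩).1 else σ k with hsfun
  have hsmem : ∀ f k, sfun f k ∈ F.reps := by
    intro f k
    rw [hsfun]
    simp only
    split_ifs with h
    · exact (f ⟨k, h⟩).2
    · exact hσ k
  have hcover : A ∩ F.Attractor a b ⊆ ⋃ f : J → {x // x ∈ F.reps}, F.Cyl a b (sfun f) Mf := by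
    rintro p hp
    obtain ⟨sp, hsp1, hsp2⟩ := F.exists_symbol a b ha0 ha hb hp.2
    refine Set.mem_iUnion.2 ⟨fun j => ⟨sp j.1, hsp1 j.1⟩, hp.2, fun k hk => ?_⟩
    rw [abs_le] at hk
    rw [hsfun]
    simp only
    split_ifs with h
    · exact hsp2 k
    · rw [hJ, Finset.mem_Icc] at h
      refine hA p hp k (by omega) (by omega)
  calc μ (A ∩ F.Attractor a b) ≤ μ (⋃ f : J → {x // x ∈ F.reps}, F.Cyl a b (sfun f) Mf) :=
        measure_mono hcover
    _ ≤ ∑' f : J → {x // x ∈ F.reps}, μ (F.Cyl a b (sfun f) Mf) := measure_iUnion_le _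
    _ = ∑' f : J → {x // x ∈ F.reps}, ((F.q : ENNReal))⁻¹ ^ (2 * Mf + 1) :=
        tsum_congr (fun f => hcyl (sfun f) (hsmem f) Mf)
    _ = (Fintype.card (J → {x // x ∈ F.reps})) • ((F.q : ENNReal))⁻¹ ^ (2 * Mf + 1) := by
        rw [tsum_fintype, Finset.sum_const, Finset.card_univ]
    _ ≤ (F.q : ENNReal) ^ (Mf - Mb) * ((F.q : ENNReal))⁻¹ ^ (2 * Mf + 1) := by
        have hcard : Fintype.card (J → {x // x ∈ F.reps}) = F.q ^ (Mf - Mb) := by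
          rw [Fintype.card_fun]
          congr 1
          · simp [Fintype.card_coe, F.card_reps]
          · rw [Fintype.card_coe, hJ, Int.card_Icc]
            omega
        rw [hcard, nsmul_eq_mul]
        apply mul_le_mul_left
        norm_cast

end Meas

end NAField

theorem stmt16 [MeasurableSpace K] [BorelSpace K]
    (F : NAField K) (a b : K) (ha0 : a ≠ 0) (ha : ‖a‖ < 1)
    (hb : ‖b‖ = (F.q : ℝ)) (μ : Measure (K × K))
    (hprob : μ Set.univ = 1)
    (hcyl : ∀ s : ℤ → K, (∀ k, s k ∈ F.reps) → ∀ M : ℕ,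
      μ (F.Cyl a b s M) = ((F.q : ENNReal))⁻¹ ^ (2 * M + 1)) :
    ∃ C : ENNReal, 0 < C ∧ C ≠ ⊤ ∧
      ∀ A : Set (K × K), MeasurableSet A →
        μ A ≤ C * EMetric.diam A ^ (1 + 1 / (1 + Real.logb F.q ‖a‖⁻¹)) := by
  classical
  obtain ⟨v, hv1, hv⟩ := F.exists_v a ha0 ha
  have hq1R : (1:ℝ) < (F.q:ℝ) := by exact_mod_cast F.one_lt_q
  have hqinv_pos := F.q_inv_pos
  have hqinv_lt1 := F.q_inv_lt_one
  set Q : ENNReal := (F.q : ENNReal) with hQ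
  have hQ1 : 1 ≤ Q := by rw [hQ]; exact_mod_cast F.one_lt_q.le
  have hQ0 : Q ≠ 0 := by rw [hQ]; simp only [ne_eq, Nat.cast_eq_zero]; have := F.one_lt_q; omega
  have hQtop : Q ≠ ⊤ := by rw [hQ]; exact ENNReal.natCast_ne_top _
  set α : ℝ := 1 + 1 / (1 + Real.logb F.q ‖a‖⁻¹) with hα
  have hVpos : (0:ℝ) < (v:ℝ) + 1 := by positivity
  have hV1 : (1:ℝ) ≤ (v:ℝ) := by exact_mod_cast hv1
  have hαeq : α = 1 + 1/((v:ℝ)+1) := by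
    rw [hα, hv, inv_inv, ← Real.rpow_natCast, Real.logb_rpow F.q_pos (ne_of_gt hq1R)]
    ring_nf
  have hαpos : 0 < α := by rw [hαeq]; positivity
  have hα2 : α ≤ 2 := by
    rw [hαeq]
    have h1 : 1/((v:ℝ)+1) ≤ 1 := by
      rw [div_le_one hVpos]; linarith
    linarith
  have hCpos : 0 < Q ^ ((10*((v:ℝ)+1)) : ℝ) :=
    ENNReal.rpow_pos (lt_of_lt_of_le zero_lt_one hQ1) hQtop
  refine ⟨Q ^ ((10*((v:ℝ)+1)) : ℝ), hCpos, ENNReal.rpow_ne_top_of_nonneg (by positivity) hQtop, ?_⟩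
  intro A hAmeas
  have hnull := F.attractor_compl_null a b μ hprob hcyl
  have hmain : μ A ≤ μ (A ∩ F.Attractor a b) := by
    have hsub : A ⊆ (A ∩ F.Attractor a b) ∪ (F.Attractor a b)ᶜ := by
      intro p hp
      by_cases hc : p ∈ F.Attractor a b
      · exact Or.inl ⟨hp, hc⟩
      · exact Or.inr hc
    calc μ A ≤ μ ((A ∩ F.Attractor a b) ∪ (F.Attractor a b)ᶜ) := measure_mono hsub
      _ ≤ μ (A ∩ F.Attractor a b) + μ ((F.Attractor a b)ᶜ) := measure_union_le _ _
      _ = μ (A ∩ F.Attractor a b) := by rw [hnull, add_zero]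
  rcases Set.eq_empty_or_nonempty (A ∩ F.Attractor a b) with hAe | ⟨p₀, hp₀⟩
  · have : μ A = 0 := le_antisymm (by rw [hAe, measure_empty] at hmain; exact hmain) (zero_le)
    rw [this]
    exact zero_le
  obtain ⟨σs, hσ1, hσ2⟩ := F.exists_symbol a b ha0 ha hb hp₀.2
  set d := EMetric.diam A with hd
  by_cases hdtop : d = ⊤
  · rw [hdtop, ENNReal.top_rpow_of_pos hαpos, ENNReal.mul_top (ne_of_gt hCpos)]
    exact le_top
  set r : ℝ := d.toReal with hr
  have hdofr : d = ENNReal.ofReal r := (ENNReal.ofReal_toReal hdtop).symm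
  have hr0 : 0 ≤ r := ENNReal.toReal_nonneg
  have hDd : ∀ p ∈ A ∩ F.Attractor a b, NAField.Dd p p₀ ≤ r := by
    intro p hp
    have h1 : edist p p₀ ≤ d := EMetric.edist_le_diam_of_mem hp.1 hp₀.1
    have h2 : dist p p₀ ≤ r := by
      rw [hr, dist_edist]
      exact ENNReal.toReal_mono hdtop h1
    calc NAField.Dd p p₀ = dist p p₀ := by
          rw [NAField.Dd, Prod.dist_eq, dist_eq_norm, dist_eq_norm]
      _ ≤ r := h2
  -- conversion helpers
  have hQpow : ∀ m : ℕ, (ENNReal.ofReal ((F.q:ℝ)⁻¹ ^ m)) = Q⁻¹ ^ m := by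
    intro m
    rw [ENNReal.ofReal_pow hqinv_pos.le, ENNReal.ofReal_inv_of_pos F.q_pos,
      ENNReal.ofReal_natCast]
  have hQrpow : ∀ m : ℕ, Q ^ (-(m:ℝ)) = Q⁻¹ ^ m := by
    intro m
    rw [ENNReal.rpow_neg, ENNReal.rpow_natCast, ENNReal.inv_pow]
  -- key covering estimate
  have hkey : ∀ Mf Mb : ℕ, Mb ≤ Mf → ((F.q:ℝ)^Mf * r ≤ (F.q:ℝ)⁻¹) →
      (((F.q:ℝ)^(v+1))^Mb * r ≤ (F.q:ℝ)⁻¹) →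
      μ A ≤ Q ^ (Mf - Mb) * Q⁻¹ ^ (2*Mf+1) := by
    intro Mf Mb hMb hfwd hbwd
    refine le_trans hmain ?_
    refine F.cover_bound a b ha0 ha hb μ hcyl Mf Mb hMb σs hσ1 A ?_
    intro p hp k hk1 hk2
    have na' : ∀ x y : K, ‖x + y‖ ≤ max ‖x‖ ‖y‖ := F.na
    have htri : ‖(F.iterZ a b k p).1 - σs k‖ ≤
        max ‖(F.iterZ a b k p).1 - (F.iterZ a b k p₀).1‖ ‖(F.iterZ a b k p₀).1 - σs k‖ := by
      have heq : (F.iterZ a b k p).1 - σs k =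
          ((F.iterZ a b k p).1 - (F.iterZ a b k p₀).1) + ((F.iterZ a b k p₀).1 - σs k) := by
        ring
      rw [heq]
      exact na' _ _
    refine le_trans htri (max_le ?_ (hσ2 k))
    have hDp := hDd p hp
    rcases le_or_gt 0 k with hk0 | hk0
    · have hgrow := (F.growth_fwd a b ha hb ha0 hp.2 hp₀.2 k.toNat).1
      rw [Int.toNat_of_nonneg hk0] at hgrow
      refine le_trans hgrow ?_
      calc (F.q:ℝ)^k.toNat * NAField.Dd p p₀ ≤ (F.q:ℝ)^Mf * r := by
            apply mul_le_mul (pow_le_pow_right₀ hq1R.le (by omega)) hDp (NAField.Dd_nonneg _ _)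
              (by positivity)
        _ ≤ (F.q:ℝ)⁻¹ := hfwd
    · have hgrow := (F.growth_bwd a b ha hb ha0 hv hp.2 hp₀.2 (-k).toNat).1
      rw [show -(((-k).toNat:ℕ):ℤ) = k by omega] at hgrow
      refine le_trans hgrow ?_
      calc ((F.q:ℝ)^(v+1))^(-k).toNat * NAField.Dd p p₀ ≤ ((F.q:ℝ)^(v+1))^Mb * r := by
            apply mul_le_mul (pow_le_pow_right₀ (one_le_pow₀ hq1R.le) (by omega)) hDp
              (NAField.Dd_nonneg _ _) (by positivity)
        _ ≤ _ := hbwd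
  rcases eq_or_lt_of_le hr0 with hr0' | hrpos
  · -- r = 0 case : μ A = 0
    have hμ0 : ∀ M : ℕ, μ A ≤ Q⁻¹ ^ (2*M+1) := by
      intro M
      have h := hkey M M le_rfl (by rw [← hr0']; simp [hqinv_pos.le])
        (by rw [← hr0']; simp [hqinv_pos.le])
      simpa [Nat.sub_self] using h
    have hlt : Q⁻¹ < 1 := by
      rw [ENNReal.inv_lt_one, hQ]
      exact_mod_cast F.one_lt_q
    have htend0 : Tendsto (fun M : ℕ => Q⁻¹ ^ M) atTop (nhds 0) :=
      ENNReal.tendsto_pow_atTop_nhds_zero_of_lt_one hlt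
    have htend : Tendsto (fun M : ℕ => Q⁻¹ ^ (2*M+1)) atTop (nhds 0) := by
      refine htend0.comp ?_
      refine Filter.tendsto_atTop_atTop.mpr (fun c => ⟨c, fun m hm => by omega⟩)
    have hz : μ A ≤ 0 := ge_of_tendsto htend (Filter.Eventually.of_forall hμ0)
    calc μ A ≤ 0 := hz
      _ ≤ _ := zero_le
  rcases le_or_gt r ((F.q:ℝ)⁻¹^2) with hle | hgt
  · -- main case: find n with q⁻¹^(n+1) < r ≤ q⁻¹^n
    obtain ⟨n, hn2, hnP, hnot⟩ : ∃ n : ℕ, 2 ≤ n ∧ r ≤ (F.q:ℝ)⁻¹ ^ n ∧ (F.q:ℝ)⁻¹^(n+1) < r := by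
      obtain ⟨m₀, hm₀⟩ := exists_pow_lt_of_lt_one hrpos hqinv_lt1
      set P : ℕ → Prop := fun m => r ≤ (F.q:ℝ)⁻¹ ^ m with hP
      have hP2 : P 2 := hle
      have h2m₀ : 2 ≤ m₀ := by
        by_contra hc
        push_neg at hc
        have h3 : (F.q:ℝ)⁻¹^2 ≤ (F.q:ℝ)⁻¹^m₀ :=
          pow_le_pow_of_le_one hqinv_pos.le hqinv_lt1.le (by omega)
        linarith
      refine ⟨Nat.findGreatest P m₀, Nat.le_findGreatest h2m₀ hP2,
        Nat.findGreatest_spec h2m₀ hP2, ?_⟩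
      have hng : ¬ P (Nat.findGreatest P m₀ + 1) := by
        rcases le_or_gt (Nat.findGreatest P m₀ + 1) m₀ with hcase | hcase
        · exact Nat.findGreatest_is_greatest (Nat.lt_succ_self _) hcase
        · intro hcon
          have h4 : (F.q:ℝ)⁻¹^(Nat.findGreatest P m₀ + 1) ≤ (F.q:ℝ)⁻¹^m₀ :=
            pow_le_pow_of_le_one hqinv_pos.le hqinv_lt1.le (by omega)
          have hcon' : r ≤ (F.q:ℝ)⁻¹ ^ (Nat.findGreatest P m₀ + 1) := hcon
          linarith
      have hng' : ¬ r ≤ (F.q:ℝ)⁻¹ ^ (Nat.findGreatest P m₀ + 1) := hng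
      exact not_le.mp hng'
    set Mf := n - 1 with hMf
    set Mb := (n-1)/(v+1) with hMb'
    have hMbf : Mb ≤ Mf := Nat.div_le_self _ _
    have hpoweq : (F.q:ℝ)^(n-1) * (F.q:ℝ)⁻¹^n = (F.q:ℝ)⁻¹ := by
      have hsplit : (F.q:ℝ)⁻¹^n = (F.q:ℝ)⁻¹^(n-1) * (F.q:ℝ)⁻¹ := by
        rw [← pow_succ]
        congr 1
        omega
      rw [hsplit, ← mul_assoc, ← mul_pow, mul_inv_cancel₀ (ne_of_gt F.q_pos), one_pow, one_mul]
    have hfwd : (F.q:ℝ)^Mf * r ≤ (F.q:ℝ)⁻¹ := by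
      calc (F.q:ℝ)^Mf * r ≤ (F.q:ℝ)^(n-1) * (F.q:ℝ)⁻¹^n :=
            mul_le_mul (le_of_eq rfl) hnP hrpos.le (by positivity)
        _ = (F.q:ℝ)⁻¹ := hpoweq
    have hdivle : (v+1)*Mb ≤ n-1 := by
      rw [hMb', mul_comm]
      exact Nat.div_mul_le_self _ _
    have hbwd : ((F.q:ℝ)^(v+1))^Mb * r ≤ (F.q:ℝ)⁻¹ := by
      rw [← pow_mul]
      calc (F.q:ℝ)^((v+1)*Mb) * r ≤ (F.q:ℝ)^(n-1) * (F.q:ℝ)⁻¹^n :=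
            mul_le_mul (pow_le_pow_right₀ hq1R.le hdivle) hnP hrpos.le (by positivity)
        _ = (F.q:ℝ)⁻¹ := hpoweq
    refine le_trans (hkey Mf Mb hMbf hfwd hbwd) ?_
    have hL : Q ^ (Mf - Mb) * Q⁻¹ ^ (2*Mf+1) =
        Q ^ ((((Mf - Mb:ℕ)):ℝ) + (-(((2*Mf+1:ℕ)):ℝ))) := by
      rw [ENNReal.rpow_add _ _ hQ0 hQtop, ENNReal.rpow_natCast, hQrpow (2*Mf+1)]
    rw [hL]
    have hdlb : Q ^ (-(((n+1:ℕ)):ℝ)) ≤ d := by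
      rw [hQrpow (n+1), hdofr, ← hQpow (n+1)]
      exact ENNReal.ofReal_le_ofReal hnot.le
    have hdα : Q ^ ((-(((n+1:ℕ)):ℝ)) * α) ≤ d ^ α := by
      rw [ENNReal.rpow_mul]
      exact ENNReal.rpow_le_rpow hdlb hαpos.le
    -- real exponent inequality
    have hMfreal : ((Mf:ℕ):ℝ) = (n:ℝ) - 1 := by
      rw [hMf, Nat.cast_sub (by omega)]
      norm_num
    have hsubreal : (((Mf - Mb:ℕ)):ℝ) = ((Mf:ℕ):ℝ) - ((Mb:ℕ):ℝ) := by
      rw [Nat.cast_sub hMbf]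
    have hcastdiv : (n:ℝ) ≤ ((v:ℝ)+1)*(Mb:ℝ) + (v:ℝ) + 1 := by
      have h1 := Nat.div_add_mod (n-1) (v+1)
      have h2 : (n-1) % (v+1) < v+1 := Nat.mod_lt _ (by omega)
      have h3 : n ≤ (v+1)*((n-1)/(v+1)) + v + 1 := by omega
      rw [← hMb'] at h3
      exact_mod_cast h3
    have hfrac : ((n:ℝ)+1) * (1/((v:ℝ)+1)) ≤ (Mb:ℝ) + 11 := by
      rw [mul_one_div, div_le_iff₀ hVpos]
      nlinarith [hcastdiv, hV1, Nat.cast_nonneg (α := ℝ) Mb, hVpos]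
    have hreal : ((n:ℝ)+1)*α ≤ ((n:ℝ) - 1) + (Mb:ℝ) + 1 + 10*((v:ℝ)+1) := by
      rw [hαeq, mul_add, mul_one]
      linarith [hfrac, hV1]
    have hexp : (((Mf - Mb:ℕ)):ℝ) + (-(((2*Mf+1:ℕ)):ℝ)) ≤
        (10*((v:ℝ)+1)) + (-(((n+1:ℕ)):ℝ)) * α := by
      rw [hsubreal, hMfreal]
      push_cast
      push_cast at hMfreal
      linarith [hreal, hMfreal]
    calc Q ^ ((((Mf - Mb:ℕ)):ℝ) + (-(((2*Mf+1:ℕ)):ℝ)))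
        ≤ Q ^ ((10*((v:ℝ)+1)) + (-(((n+1:ℕ)):ℝ)) * α) :=
          ENNReal.rpow_le_rpow_of_exponent_le hQ1 hexp
      _ = Q ^ ((10*((v:ℝ)+1)):ℝ) * Q ^ ((-(((n+1:ℕ)):ℝ)) * α) :=
          ENNReal.rpow_add _ _ hQ0 hQtop
      _ ≤ Q ^ ((10*((v:ℝ)+1)):ℝ) * d ^ α := mul_le_mul_right hdα _
  · -- big diameter case: trivial bound
    have hd2 : Q ^ (-((2:ℕ):ℝ)) ≤ d := by
      rw [hQrpow 2, hdofr, ← hQpow 2]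
      exact ENNReal.ofReal_le_ofReal hgt.le
    have hdα : Q ^ ((-((2:ℕ):ℝ)) * α) ≤ d ^ α := by
      rw [ENNReal.rpow_mul]
      exact ENNReal.rpow_le_rpow hd2 hαpos.le
    calc μ A ≤ μ Set.univ := measure_mono (Set.subset_univ A)
      _ = 1 := hprob
      _ = Q ^ (0:ℝ) := ENNReal.rpow_zero.symm
      _ ≤ Q ^ ((10*((v:ℝ)+1)) + (-((2:ℕ):ℝ)) * α) := by
          apply ENNReal.rpow_le_rpow_of_exponent_le hQ1
          push_cast
          linarith [hα2, hαpos, hV1]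
      _ = Q ^ ((10*((v:ℝ)+1)):ℝ) * Q ^ ((-((2:ℕ):ℝ)) * α) := ENNReal.rpow_add _ _ hQ0 hQtop
      _ ≤ Q ^ ((10*((v:ℝ)+1)):ℝ) * d ^ α := mul_le_mul_right hdα _
end
end

section
/- If (x,y) and (x',y') in R² have the same forward itinerary, i.e., for every k ≥ 0 the points T^k(x,y) and T^k(x',y') lie in the same vertical strip D_{1/q}(s_k) × R, then ‖Tⁿ(x,y) - Tⁿ(x',y')‖ → 0 as n → ∞; in fact ‖Tⁿ(x,y) - Tⁿ(x',y')‖ ≤ |a|^{n-1}/qⁿ for all n ≥ 1. -/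
open scoped Classical
open MeasureTheory Filter

noncomputable section

variable {K : Type*} [NormedField K]

set_option maxHeartbeats 1000000
set_option synthInstance.maxHeartbeats 400000

namespace MyAux

variable {K : Type*} [NormedField K]

lemma na_sub (F : NAField K) (x y : K) : ‖x - y‖ ≤ max ‖x‖ ‖y‖ := by
  simpa [sub_eq_add_neg] using F.na x (-y)

lemma na_sum (F : NAField K) {ι : Type*} (s : Finset ι) (f : ι → K) (c : ℝ)
    (hc : 0 ≤ c) (h : ∀ i ∈ s, ‖f i‖ ≤ c) : ‖∑ i ∈ s, f i‖ ≤ c := by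
  classical
  induction s using Finset.induction with
  | empty => simpa
  | @insert a s ha ih =>
    rw [Finset.sum_insert ha]
    refine (F.na _ _).trans (max_le (h a (Finset.mem_insert_self a s)) ?_)
    exact ih fun i hi => h i (Finset.mem_insert_of_mem hi)

/-- The ring of integers as a subring. -/
def intRing (F : NAField K) : Subring K where
  carrier := {x | ‖x‖ ≤ 1}
  mul_mem' := by
    intro x y hx hy
    simp only [Set.mem_setOf_eq] at *
    calc ‖x * y‖ = ‖x‖ * ‖y‖ := norm_mul x y
      _ ≤ 1 * 1 := mul_le_mul hx hy (norm_nonneg y) zero_le_one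
      _ = 1 := mul_one 1
  one_mem' := by simp
  add_mem' := by
    intro x y hx hy
    exact (F.na x y).trans (max_le hx hy)
  zero_mem' := by simp
  neg_mem' := by
    intro x hx
    simpa using hx

lemma qpos (F : NAField K) : (0:ℝ) < (F.q : ℝ) := by
  exact_mod_cast Nat.lt_of_lt_of_le Nat.zero_lt_one F.one_lt_q.le

lemma qinv_lt_one (F : NAField K) : (F.q : ℝ)⁻¹ < 1 := by
  rw [inv_lt_one_iff₀]; right; exact_mod_cast F.one_lt_q

lemma qinv_nonneg (F : NAField K) : (0:ℝ) ≤ (F.q : ℝ)⁻¹ := by positivity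

/-- The maximal ideal. -/
def maxIdeal (F : NAField K) : Ideal (intRing F) where
  carrier := {x | ‖(x : K)‖ ≤ (F.q : ℝ)⁻¹}
  add_mem' := by
    intro x y hx hy
    exact (F.na (x:K) (y:K)).trans (max_le hx hy)
  zero_mem' := by simp [qinv_nonneg F]
  smul_mem' := by
    intro c x hx
    simp only [Set.mem_setOf_eq, smul_eq_mul] at *
    calc ‖((c*x : intRing F) : K)‖ = ‖(c:K)‖ * ‖(x:K)‖ := norm_mul _ _
      _ ≤ 1 * (F.q : ℝ)⁻¹ := mul_le_mul c.2 hx (norm_nonneg _) zero_le_one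
      _ = (F.q : ℝ)⁻¹ := one_mul _

/-- The key arithmetical fact: `‖q‖ ≤ 1/q`. -/
lemma norm_q_le (F : NAField K) : ‖(F.q : K)‖ ≤ (F.q : ℝ)⁻¹ := by
  classical
  let Q := (intRing F) ⧸ (maxIdeal F)
  let mk : intRing F →+* Q := Ideal.Quotient.mk (maxIdeal F)
  let g : {x // x ∈ F.reps} → Q := fun s => mk ⟨(s : K), F.norm_reps s s.2⟩
  have hginj : Function.Injective g := by
    intro s t hst
    by_contra hne
    have hne' : (s : K) ≠ (t : K) := fun h => hne (Subtype.ext h)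
    have hmem : (⟨(s : K), F.norm_reps s s.2⟩ - ⟨(t : K), F.norm_reps t t.2⟩ :
        intRing F) ∈ maxIdeal F := by
      rw [← Ideal.Quotient.eq_zero_iff_mem, RingHom.map_sub, sub_eq_zero]
      exact hst
    have h2 : ‖(s : K) - (t : K)‖ ≤ (F.q : ℝ)⁻¹ := hmem
    exact absurd h2 (not_le.mpr (F.reps_sep s s.2 t t.2 hne'))
  have hgsurj : Function.Surjective g := by
    intro x
    obtain ⟨y, rfl⟩ := Ideal.Quotient.mk_surjective x
    obtain ⟨s, hs, hclose⟩ := F.reps_cover (y : K) y.2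
    refine ⟨⟨s, hs⟩, ?_⟩
    show mk _ = mk y
    rw [← sub_eq_zero, ← RingHom.map_sub, Ideal.Quotient.eq_zero_iff_mem]
    show ‖((⟨s, F.norm_reps s hs⟩ - y : intRing F) : K)‖ ≤ (F.q : ℝ)⁻¹
    have h4 : ((⟨s, F.norm_reps s hs⟩ - y : intRing F) : K) = s - (y : K) := rfl
    rw [h4, ← norm_neg]
    simpa [neg_sub] using hclose
  have hbij : Function.Bijective g := ⟨hginj, hgsurj⟩
  have : Fintype Q := Fintype.ofBijective g hbij
  have hcard : Fintype.card Q = F.q := by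
    rw [← Fintype.card_of_bijective hbij, Fintype.card_coe, F.card_reps]
  have hzero : (F.q : Q) = 0 := by
    have h5 := card_nsmul_eq_zero (G := Q) (x := (1 : Q))
    rw [hcard, nsmul_eq_mul, mul_one] at h5
    exact h5
  have h6 : mk (F.q : intRing F) = 0 := by
    rw [map_natCast mk F.q]; exact hzero
  have hmem : (F.q : intRing F) ∈ maxIdeal F :=
    (Ideal.Quotient.eq_zero_iff_mem).mp h6
  have h7 : ‖((F.q : intRing F) : K)‖ ≤ (F.q : ℝ)⁻¹ := hmem
  simpa using h7

lemma norm_pow_le_one (x : K) (hx : ‖x‖ ≤ 1) (j : ℕ) : ‖x ^ j‖ ≤ 1 := by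
  calc ‖x ^ j‖ = ‖x‖ ^ j := norm_pow x j
    _ ≤ 1 ^ j := pow_le_pow_left₀ (norm_nonneg x) hx j
    _ = 1 := one_pow j

lemma pow_sub_pow_norm_le (F : NAField K) (x y : K) (hx : ‖x‖ ≤ 1) (hy : ‖y‖ ≤ 1) :
    ∀ j : ℕ, ‖x ^ j - y ^ j‖ ≤ ‖x - y‖ := by
  intro j
  induction j with
  | zero => simp
  | succ j ih =>
    have key : x ^ (j+1) - y ^ (j+1) = x * (x ^ j - y ^ j) + (x - y) * y ^ j := by
      ring
    rw [key]
    refine (F.na _ _).trans (max_le ?_ ?_)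
    · calc ‖x * (x ^ j - y ^ j)‖ = ‖x‖ * ‖x ^ j - y ^ j‖ := norm_mul _ _
        _ ≤ 1 * ‖x - y‖ := mul_le_mul hx ih (norm_nonneg _) zero_le_one
        _ = ‖x - y‖ := one_mul _
    · calc ‖(x - y) * y ^ j‖ = ‖x - y‖ * ‖y ^ j‖ := norm_mul _ _
        _ ≤ ‖x - y‖ * 1 := mul_le_mul_of_nonneg_left (norm_pow_le_one y hy j) (norm_nonneg _)
        _ = ‖x - y‖ := mul_one _

/-- Key equality: for `x, x'` in the same residue disc,
`‖f x - f x'‖ = ‖x - x'‖` where `f t = t ^ q - t`. -/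
lemma key_eq (F : NAField K) (x x' : K) (hx : ‖x‖ ≤ 1) (hx' : ‖x'‖ ≤ 1)
    (hclose : ‖x - x'‖ ≤ (F.q : ℝ)⁻¹) :
    ‖(x ^ F.q - x) - (x' ^ F.q - x')‖ = ‖x - x'‖ := by
  classical
  set S : K := ∑ i ∈ Finset.range F.q, x ^ i * x' ^ (F.q - 1 - i) with hS
  have hgeom : S * (x - x') = x ^ F.q - x' ^ F.q := geom_sum₂_mul x x' F.q
  have hrw : (x ^ F.q - x) - (x' ^ F.q - x') = (S - 1) * (x - x') := by
    rw [sub_mul, hgeom]; ring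
  -- ‖S‖ ≤ 1/q
  have hSsmall : ‖S‖ ≤ (F.q : ℝ)⁻¹ := by
    have hdiff : S - (F.q : K) * x ^ (F.q - 1)
        = ∑ i ∈ Finset.range F.q, x ^ i * (x' ^ (F.q - 1 - i) - x ^ (F.q - 1 - i)) := by
      have hqx : (F.q : K) * x ^ (F.q - 1)
          = ∑ i ∈ Finset.range F.q, x ^ i * x ^ (F.q - 1 - i) := by
        have : ∀ i ∈ Finset.range F.q, x ^ i * x ^ (F.q - 1 - i) = x ^ (F.q - 1) := by
          intro i hi
          have hile : i ≤ F.q - 1 := Nat.le_sub_one_of_lt (Finset.mem_range.mp hi)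
          rw [← pow_add, Nat.add_sub_cancel' hile]
        rw [Finset.sum_congr rfl this, Finset.sum_const, Finset.card_range, nsmul_eq_mul]
      rw [hS, hqx, ← Finset.sum_sub_distrib]
      exact Finset.sum_congr rfl fun i _ => by ring
    have hterm : ∀ i ∈ Finset.range F.q,
        ‖x ^ i * (x' ^ (F.q - 1 - i) - x ^ (F.q - 1 - i))‖ ≤ (F.q : ℝ)⁻¹ := by
      intro i _
      calc ‖x ^ i * (x' ^ (F.q - 1 - i) - x ^ (F.q - 1 - i))‖
          = ‖x ^ i‖ * ‖x' ^ (F.q - 1 - i) - x ^ (F.q - 1 - i)‖ := norm_mul _ _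
        _ ≤ 1 * (F.q : ℝ)⁻¹ := by
            refine mul_le_mul (norm_pow_le_one x hx i) ?_ (norm_nonneg _) zero_le_one
            refine (pow_sub_pow_norm_le F x' x hx' hx _).trans ?_
            rw [← norm_neg, neg_sub]; exact hclose
        _ = (F.q : ℝ)⁻¹ := one_mul _
    have h1 : ‖S - (F.q : K) * x ^ (F.q - 1)‖ ≤ (F.q : ℝ)⁻¹ := by
      rw [hdiff]; exact na_sum F _ _ _ (qinv_nonneg F) hterm
    have h2 : ‖(F.q : K) * x ^ (F.q - 1)‖ ≤ (F.q : ℝ)⁻¹ := by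
      calc ‖(F.q : K) * x ^ (F.q - 1)‖ = ‖(F.q : K)‖ * ‖x ^ (F.q - 1)‖ := norm_mul _ _
        _ ≤ (F.q : ℝ)⁻¹ * 1 :=
            mul_le_mul (norm_q_le F) (norm_pow_le_one x hx _) (norm_nonneg _) (qinv_nonneg F)
        _ = (F.q : ℝ)⁻¹ := mul_one _
    have h3 : S = (S - (F.q : K) * x ^ (F.q - 1)) + (F.q : K) * x ^ (F.q - 1) := by ring
    rw [h3]
    exact (F.na _ _).trans (max_le h1 h2)
  -- ‖S - 1‖ = 1
  have hS1 : ‖S - 1‖ = 1 := by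
    have hub : ‖S - 1‖ ≤ 1 :=
      (na_sub F S 1).trans (max_le (hSsmall.trans (qinv_lt_one F).le) (by simp))
    have hlb : 1 ≤ ‖S - 1‖ := by
      by_contra hlt
      push_neg at hlt
      have he : (1:ℝ) = ‖(S - 1) - S‖ := by norm_num
      have h3 : ‖(S - 1) - S‖ ≤ max ‖S - 1‖ ‖S‖ := na_sub F _ _
      rw [← he] at h3
      have h4 : max ‖S - 1‖ ‖S‖ < 1 :=
        max_lt hlt (lt_of_le_of_lt hSsmall (qinv_lt_one F))
      linarith
    linarith
  rw [hrw, norm_mul, hS1, one_mul]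

end MyAux

theorem stmt18' {K : Type*} [NormedField K] (F : NAField K) (a b : K) (ha0 : a ≠ 0) (ha : ‖a‖ < 1)
    (hb : ‖b‖ = (F.q : ℝ))
    (p p' : K × K)
    (hp : ‖p.1‖ ≤ 1 ∧ ‖p.2‖ ≤ 1) (hp' : ‖p'.1‖ ≤ 1 ∧ ‖p'.2‖ ≤ 1)
    (hsame : ∀ k : ℕ, ∃ s ∈ F.reps,
      ‖((F.Tmap a b)^[k] p).1 - s‖ ≤ ((F.q : ℝ))⁻¹ ∧
      ‖((F.Tmap a b)^[k] p').1 - s‖ ≤ ((F.q : ℝ))⁻¹) :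
    (∀ n : ℕ, 1 ≤ n →
      max ‖((F.Tmap a b)^[n] p).1 - ((F.Tmap a b)^[n] p').1‖
          ‖((F.Tmap a b)^[n] p).2 - ((F.Tmap a b)^[n] p').2‖
        ≤ ‖a‖ ^ (n - 1) / (F.q : ℝ) ^ n) ∧
    Filter.Tendsto (fun n : ℕ =>
      max ‖((F.Tmap a b)^[n] p).1 - ((F.Tmap a b)^[n] p').1‖
          ‖((F.Tmap a b)^[n] p).2 - ((F.Tmap a b)^[n] p').2‖)
      Filter.atTop (nhds 0) := by
  classical
  set T := F.Tmap a b with hT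
  set A := ‖a‖ with hA
  set Q := (F.q : ℝ) with hQ
  have hQ1 : (1:ℝ) < Q := by rw [hQ]; exact_mod_cast F.one_lt_q
  have hQ0 : (0:ℝ) < Q := MyAux.qpos F
  have hA0 : 0 < A := norm_pos_iff.mpr ha0
  have hA1 : A ≤ 1 := ha.le
  set u : ℕ → ℝ := fun n => ‖(T^[n] p).1 - (T^[n] p').1‖ with hu
  -- first coordinates stay in R, and distances ≤ 1/q
  have hx1 : ∀ n : ℕ, ‖(T^[n] p).1‖ ≤ 1 ∧ ‖(T^[n] p').1‖ ≤ 1 ∧ u n ≤ Q⁻¹ := by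
    intro n
    obtain ⟨s, hs, h1, h2⟩ := hsame n
    have hns : ‖s‖ ≤ 1 := F.norm_reps s hs
    have e1 : (T^[n] p).1 = ((T^[n] p).1 - s) + s := by ring
    have e2 : (T^[n] p').1 = ((T^[n] p').1 - s) + s := by ring
    refine ⟨?_, ?_, ?_⟩
    · rw [e1]
      exact (F.na _ _).trans (max_le (h1.trans (MyAux.qinv_lt_one F).le) hns)
    · rw [e2]
      exact (F.na _ _).trans (max_le (h2.trans (MyAux.qinv_lt_one F).le) hns)
    · have e3 : (T^[n] p).1 - (T^[n] p').1 = ((T^[n] p).1 - s) - ((T^[n] p').1 - s) := by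
        ring
      show ‖(T^[n] p).1 - (T^[n] p').1‖ ≤ Q⁻¹
      rw [e3]
      exact (MyAux.na_sub F _ _).trans (max_le h1 h2)
  -- second coordinate identities
  have hsnd : ∀ n : ℕ, (T^[n+1] p).2 = (T^[n] p).1 := by
    intro n; rw [Function.iterate_succ_apply']; rfl
  have hsnd' : ∀ n : ℕ, (T^[n+1] p').2 = (T^[n] p').1 := by
    intro n; rw [Function.iterate_succ_apply']; rfl
  -- the key recursion
  have hrec : ∀ n : ℕ, Q * u (n+1) ≤ max (u (n+2)) (A * u n) := by
    intro n
    have e1 : (T^[n+2] p).1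
        = a * (T^[n] p).1 + b * ((T^[n+1] p).1 ^ F.q - (T^[n+1] p).1) := by
      rw [show n+2 = (n+1)+1 from rfl, Function.iterate_succ_apply']
      show a * (T^[n+1] p).2 + b * _ = _
      rw [hsnd n]
    have e1' : (T^[n+2] p').1
        = a * (T^[n] p').1 + b * ((T^[n+1] p').1 ^ F.q - (T^[n+1] p').1) := by
      rw [show n+2 = (n+1)+1 from rfl, Function.iterate_succ_apply']
      show a * (T^[n+1] p').2 + b * _ = _
      rw [hsnd' n]
    set x := (T^[n+1] p).1
    set x' := (T^[n+1] p').1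
    have hkey : ‖(x ^ F.q - x) - (x' ^ F.q - x')‖ = u (n+1) :=
      MyAux.key_eq F x x' (hx1 (n+1)).1 (hx1 (n+1)).2.1 (hx1 (n+1)).2.2
    have e4 : b * ((x ^ F.q - x) - (x' ^ F.q - x'))
        = ((T^[n+2] p).1 - (T^[n+2] p').1) - a * ((T^[n] p).1 - (T^[n] p').1) := by
      rw [e1, e1']; ring
    have e5 : Q * u (n+1) = ‖b * ((x ^ F.q - x) - (x' ^ F.q - x'))‖ := by
      rw [norm_mul, hb, hkey]
    rw [e5, e4]
    refine (MyAux.na_sub F _ _).trans ?_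
    have : ‖a * ((T^[n] p).1 - (T^[n] p').1)‖ = A * u n := norm_mul _ _
    rw [this]
  -- the decay bound
  set B : ℕ → ℝ := fun n => A ^ n / Q ^ (n+1) with hB
  have hBpos : ∀ n, 0 < B n := fun n => by
    have := hA0; have := hQ0; positivity
  have hBmono : ∀ n, B (n+1) ≤ B n := by
    intro n
    refine div_le_div₀ (pow_nonneg hA0.le n) ?_ (by positivity) ?_
    · exact pow_le_pow_of_le_one hA0.le hA1 (Nat.le_succ n)
    · exact pow_le_pow_right₀ hQ1.le (by omega)
  have hQne : Q ≠ 0 := ne_of_gt hQ0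
  have hABq : ∀ n, A * B n = Q * B (n+1) := by
    intro n
    rw [hB]
    simp only []
    field_simp
    ring
  have main : ∀ N n : ℕ, u n ≤ max (B n) (Q⁻¹ ^ N) := by
    intro N
    induction N with
    | zero =>
      intro n
      refine le_trans (hx1 n).2.2 (le_trans ?_ (le_max_right _ _))
      rw [pow_zero]
      exact (inv_le_one₀ hQ0).mpr hQ1.le
    | succ N ih =>
      intro n
      match n with
      | 0 =>
        refine le_trans (hx1 0).2.2 (le_trans ?_ (le_max_left _ _))
        rw [hB]; simp
      | (m+1) =>
        rw [← mul_le_mul_iff_right₀ hQ0]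
        refine (hrec m).trans ?_
        have hC : 0 ≤ max (B (m+1)) (Q⁻¹ ^ (N+1)) :=
          le_trans (hBpos (m+1)).le (le_max_left _ _)
        refine max_le ?_ ?_
        · refine (ih (m+2)).trans (max_le ?_ ?_)
          · calc B (m+2) ≤ B (m+1) := hBmono (m+1)
              _ ≤ Q * B (m+1) := le_mul_of_one_le_left (hBpos (m+1)).le hQ1.le
              _ ≤ Q * max (B (m+1)) (Q⁻¹ ^ (N+1)) :=
                  mul_le_mul_of_nonneg_left (le_max_left _ _) hQ0.le
          · have hQQ : Q * Q⁻¹ ^ (N+1) = Q⁻¹ ^ N := by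
              rw [pow_succ, mul_comm (Q⁻¹ ^ N) Q⁻¹, ← mul_assoc,
                mul_inv_cancel₀ hQne, one_mul]
            rw [← hQQ]
            exact mul_le_mul_of_nonneg_left (le_max_right _ _) hQ0.le
        · have h6 : A * u m ≤ A * max (B m) (Q⁻¹ ^ N) :=
            mul_le_mul_of_nonneg_left (ih m) hA0.le
          refine h6.trans ?_
          rw [mul_max_of_nonneg _ _ hA0.le]
          refine max_le ?_ ?_
          · rw [hABq m]
            exact mul_le_mul_of_nonneg_left (le_max_left _ _) hQ0.le
          · have hQQ : Q * Q⁻¹ ^ (N+1) = Q⁻¹ ^ N := by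
              rw [pow_succ, mul_comm (Q⁻¹ ^ N) Q⁻¹, ← mul_assoc,
                mul_inv_cancel₀ hQne, one_mul]
            have h7 : A * Q⁻¹ ^ N ≤ Q * Q⁻¹ ^ (N+1) := by
              rw [hQQ]
              exact mul_le_of_le_one_left (by positivity) hA1
            exact h7.trans (mul_le_mul_of_nonneg_left (le_max_right _ _) hQ0.le)
  have hub : ∀ n, u n ≤ B n := by
    intro n
    by_contra h
    push_neg at h
    have hupos : 0 < u n := lt_of_le_of_lt (hBpos n).le h
    obtain ⟨N, hN⟩ := exists_pow_lt_of_lt_one hupos (MyAux.qinv_lt_one F)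
    rcases max_cases (B n) (Q⁻¹ ^ N) with ⟨he, _⟩ | ⟨he, _⟩
    · exact absurd ((main N n).trans_eq he) (not_le.mpr h)
    · exact absurd ((main N n).trans_eq he) (not_le.mpr hN)
  -- conclude
  have hfinal : ∀ m : ℕ,
      max (u (m+1)) ‖(T^[m+1] p).2 - (T^[m+1] p').2‖ ≤ A ^ m / Q ^ (m+1) := by
    intro m
    refine max_le ((hub (m+1)).trans (hBmono m)) ?_
    rw [hsnd m, hsnd' m]
    exact hub m
  constructor
  · intro n hn
    obtain ⟨m, rfl⟩ : ∃ m, n = m + 1 := ⟨n - 1, by omega⟩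
    simpa [hu] using hfinal m
  · set r : ℝ := A / Q with hr
    have hr0 : 0 ≤ r := by positivity
    have hr1 : r < 1 := (div_lt_one hQ0).mpr (lt_trans ha hQ1)
    have hlim : Filter.Tendsto (fun n : ℕ => A⁻¹ * r ^ n) Filter.atTop (nhds 0) := by
      have := (tendsto_pow_atTop_nhds_zero_of_lt_one hr0 hr1).const_mul A⁻¹
      simpa using this
    refine squeeze_zero (fun n => le_trans (norm_nonneg _) (le_max_left _ _)) ?_ hlim
    intro n
    match n with
    | 0 =>
      have h1 : u 0 ≤ 1 := (MyAux.na_sub F _ _).trans (max_le hp.1 hp'.1)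
      have h2 : ‖(T^[0] p).2 - (T^[0] p').2‖ ≤ 1 :=
        (MyAux.na_sub F _ _).trans (max_le hp.2 hp'.2)
      have h3 : (1:ℝ) ≤ A⁻¹ * r ^ 0 := by
        rw [pow_zero, mul_one]
        exact (one_le_inv₀ hA0).mpr hA1
      exact (max_le h1 h2).trans h3
    | (m+1) =>
      refine (hfinal m).trans ?_
      have hAne : A ≠ 0 := ne_of_gt hA0
      have hQne : Q ≠ 0 := ne_of_gt hQ0
      have he : A⁻¹ * r ^ (m+1) = A ^ m / Q ^ (m+1) := by
        rw [hr, div_pow]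
        field_simp
        ring
      rw [he]


theorem stmt18 (F : NAField K) (a b : K) (ha0 : a ≠ 0) (ha : ‖a‖ < 1)
    (hb : ‖b‖ = (F.q : ℝ)) (p p' : K × K)
    (hp : p ∈ unitPoly K) (hp' : p' ∈ unitPoly K)
    (hsame : ∀ k : ℕ, ∃ s ∈ F.reps,
      ‖((F.Tmap a b)^[k] p).1 - s‖ ≤ ((F.q : ℝ))⁻¹ ∧
      ‖((F.Tmap a b)^[k] p').1 - s‖ ≤ ((F.q : ℝ))⁻¹) :
    (∀ n : ℕ, 1 ≤ n →
      max ‖((F.Tmap a b)^[n] p).1 - ((F.Tmap a b)^[n] p').1‖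
          ‖((F.Tmap a b)^[n] p).2 - ((F.Tmap a b)^[n] p').2‖
        ≤ ‖a‖ ^ (n - 1) / (F.q : ℝ) ^ n) ∧
    Filter.Tendsto (fun n : ℕ =>
      max ‖((F.Tmap a b)^[n] p).1 - ((F.Tmap a b)^[n] p').1‖
          ‖((F.Tmap a b)^[n] p).2 - ((F.Tmap a b)^[n] p').2‖)
      Filter.atTop (nhds 0) :=
  stmt18' F a b ha0 ha hb p p' hp hp' hsame
end
end
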